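/- arXiv:2001.03983 — 9 statements merged into one kernel-verified Lean document; each statement's English description precedes it below -/
import Mathlib

section
/- For every x ∈ 𝒳 and every w ∈ [0,1], the product measure Q_Y ⊗ Unif[0,1] of the set {(y,u) ∈ 𝒴 × [0,1] : p_c(x,y,u) < w} equals w; in other words, if Y ~ Q_Y and U ~ Unif[0,1] are independent, then the random variable p_c(x,Y,U) is uniformly distributed on [0,1]. -/
open MeasureTheory

/-- The pairwise correct probability `p_c(x,y,u)` with respect to the pmf `Q` on `Y`:
`p_c(x,y,u) = Q{y' : d(x,y') < d(x,y)} + u * Q{y' : d(x,y') = d(x,y)}`. -/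
noncomputable def pc {X Y : Type*} [Fintype Y] (Q : Y → ℝ) (d : X → Y → ℝ)
    (x : X) (y : Y) (u : ℝ) : ℝ :=
  (∑ y' : Y, if d x y' < d x y then Q y' else 0)
    + u * (∑ y' : Y, if d x y' = d x y then Q y' else 0)

/-- Telescoping sum over a finite set of reals. -/
lemma tele_sum (f b : ℝ → ℝ) (T : Finset ℝ) :
    ∑ t ∈ T, (f (∑ s ∈ T.filter (· ≤ t), b s) - f (∑ s ∈ T.filter (· < t), b s))
      = f (∑ s ∈ T, b s) - f 0 := by
  classical
  induction T using Finset.induction_on_max with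
  | empty => simp
  | insert a s hmax ih =>
    have ha : a ∉ s := fun h => lt_irrefl a (hmax a h)
    rw [Finset.sum_insert ha]
    have h1 : (insert a s).filter (· ≤ a) = insert a s := by
      rw [Finset.filter_insert, if_pos le_rfl]
      congr 1
      apply Finset.filter_true_of_mem
      intro t ht; exact (hmax t ht).le
    have h2 : (insert a s).filter (· < a) = s := by
      rw [Finset.filter_insert, if_neg (lt_irrefl a)]
      apply Finset.filter_true_of_mem
      intro t ht; exact hmax t ht
    have h5 : ∑ t ∈ s, (f (∑ s' ∈ (insert a s).filter (· ≤ t), b s')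
          - f (∑ s' ∈ (insert a s).filter (· < t), b s'))
        = ∑ t ∈ s, (f (∑ s' ∈ s.filter (· ≤ t), b s')
          - f (∑ s' ∈ s.filter (· < t), b s')) := by
      apply Finset.sum_congr rfl
      intro t ht
      rw [Finset.filter_insert, if_neg (not_le.mpr (hmax t ht)),
        Finset.filter_insert, if_neg (asymm (hmax t ht))]
    rw [h1, h2, h5, ih]
    ring

/-- Key volume computation. -/
lemma vol_key (A B w : ℝ) (hA : 0 ≤ A) (hB : 0 ≤ B) (hw : 0 ≤ w) :
    B * (volume {u : ℝ | u ∈ Set.Icc (0:ℝ) 1 ∧ A + u * B < w}).toReal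
      = min w (A + B) - min w A := by
  rcases eq_or_lt_of_le hB with hB0 | hBpos
  · simp [← hB0]
  · rcases le_or_gt w A with hwA | hAw
    · have hset : {u : ℝ | u ∈ Set.Icc (0:ℝ) 1 ∧ A + u * B < w} = ∅ := by
        ext u
        simp only [Set.mem_setOf_eq, Set.mem_Icc, Set.mem_empty_iff_false, iff_false, not_and]
        rintro ⟨h0, h1⟩ hlt
        nlinarith
      rw [hset, min_eq_left hwA, min_eq_left (by linarith)]
      simp
    · rcases le_or_gt w (A + B) with hwAB | hABw
      · have hc1 : (w - A) / B ≤ 1 := by rw [div_le_one hBpos]; linarith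
        have hc0 : 0 ≤ (w - A) / B := le_of_lt (div_pos (by linarith) hBpos)
        have hset : {u : ℝ | u ∈ Set.Icc (0:ℝ) 1 ∧ A + u * B < w}
            = Set.Ico 0 ((w - A) / B) := by
          ext u
          simp only [Set.mem_setOf_eq, Set.mem_Icc, Set.mem_Ico]
          constructor
          · rintro ⟨⟨h0, h1⟩, hlt⟩
            exact ⟨h0, (lt_div_iff₀ hBpos).mpr (by linarith)⟩
          · rintro ⟨h0, hlt⟩
            have h' := (lt_div_iff₀ hBpos).mp hlt
            exact ⟨⟨h0, by linarith⟩, by linarith⟩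
        rw [hset, Real.volume_Ico, ENNReal.toReal_ofReal (by linarith)]
        rw [min_eq_left hwAB, min_eq_right hAw.le]
        field_simp
        ring
      · have hset : {u : ℝ | u ∈ Set.Icc (0:ℝ) 1 ∧ A + u * B < w} = Set.Icc 0 1 := by
          ext u
          simp only [Set.mem_setOf_eq, Set.mem_Icc, and_iff_left_iff_imp]
          rintro ⟨h0, h1⟩
          nlinarith
        rw [hset, Real.volume_Icc, ENNReal.toReal_ofReal (by norm_num)]
        rw [min_eq_right hABw.le, min_eq_right (by linarith)]
        ring

/-- For every `x` and `w ∈ [0,1]`, the `Q ⊗ Unif[0,1]`-measure of the set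
`{(y,u) : p_c(x,y,u) < w}` equals `w`; i.e. `p_c(x,Y,U)` is uniformly distributed on `[0,1]`. -/
theorem pc_uniform {X Y : Type*} [Fintype X] [Fintype Y] [Nonempty X] [Nonempty Y]
    (Q : Y → ℝ) (hQ0 : ∀ y, 0 ≤ Q y) (hQ1 : ∑ y : Y, Q y = 1)
    (d : X → Y → ℝ) (hd : ∀ x y, 0 ≤ d x y)
    (x : X) (w : ℝ) (hw : w ∈ Set.Icc (0:ℝ) 1) :
    ∑ y : Y, Q y *
      (volume {u : ℝ | u ∈ Set.Icc (0:ℝ) 1 ∧ pc Q d x y u < w}).toReal = w := by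
  classical
  obtain ⟨hw0, hw1⟩ := hw
  set T : Finset ℝ := Finset.image (d x) Finset.univ with hT
  set b : ℝ → ℝ := fun t => ∑ y ∈ Finset.univ.filter (fun y => d x y = t), Q y with hb
  set A : ℝ → ℝ := fun t => ∑ y' : Y, if d x y' < t then Q y' else 0 with hA
  have hbnn : ∀ t, 0 ≤ b t := fun t => Finset.sum_nonneg fun y _ => hQ0 y
  have hAnn : ∀ t, 0 ≤ A t := fun t =>
    Finset.sum_nonneg fun y _ => by split <;> [exact hQ0 y; exact le_rfl]
  -- fiberwise sums over T
  have fiber : ∀ (p : ℝ → Prop) [DecidablePred p],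
      ∑ s ∈ T.filter p, b s = ∑ y : Y, if p (d x y) then Q y else 0 := by
    intro p _
    rw [← Finset.sum_filter]
    rw [← Finset.sum_fiberwise_of_maps_to (g := d x) (t := T.filter p)
      (fun y hy => Finset.mem_filter.mpr
        ⟨Finset.mem_image_of_mem _ (Finset.mem_univ y), (Finset.mem_filter.mp hy).2⟩) Q]
    apply Finset.sum_congr rfl
    intro s hs
    have hps : p s := (Finset.mem_filter.mp hs).2
    show (∑ y ∈ Finset.univ.filter (fun y => d x y = s), Q y) = _
    congr 1
    ext y
    simp only [Finset.mem_filter, Finset.mem_univ, true_and]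
    constructor
    · intro h
      exact ⟨by rw [h]; exact hps, h⟩
    · intro h
      exact h.2
  -- pc rewrite
  have hpc : ∀ (y : Y) (u : ℝ), pc Q d x y u = A (d x y) + u * b (d x y) := by
    intro y u
    simp only [pc, hA, hb, Finset.sum_filter]
  -- A t in terms of b over T
  have hAlt : ∀ t, A t = ∑ s ∈ T.filter (· < t), b s := by
    intro t; rw [fiber (· < t)]
  have hAle : ∀ t, A t + b t = ∑ s ∈ T.filter (· ≤ t), b s := by
    intro t
    rw [fiber (· ≤ t)]
    simp only [hA, hb, Finset.sum_filter, ← Finset.sum_add_distrib]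
    apply Finset.sum_congr rfl
    intro y _
    rcases lt_trichotomy (d x y) t with h | h | h
    · simp [h, ne_of_lt h, h.le]
    · simp [h]
    · simp [asymm h, ne_of_gt h, not_le.mpr h]
  -- total mass
  have htot : ∑ s ∈ T, b s = 1 := by
    have := fiber (fun _ => True)
    simpa [hQ1] using this
  -- group the main sum by fibers
  have hgroup : ∑ y : Y, Q y *
        (volume {u : ℝ | u ∈ Set.Icc (0:ℝ) 1 ∧ pc Q d x y u < w}).toReal
      = ∑ t ∈ T, b t *
        (volume {u : ℝ | u ∈ Set.Icc (0:ℝ) 1 ∧ A t + u * b t < w}).toReal := by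
    rw [← Finset.sum_fiberwise_of_maps_to (g := d x) (t := T)
      (fun y _ => Finset.mem_image_of_mem _ (Finset.mem_univ y))
      (fun y => Q y * (volume {u : ℝ | u ∈ Set.Icc (0:ℝ) 1 ∧ pc Q d x y u < w}).toReal)]
    apply Finset.sum_congr rfl
    intro t ht
    rw [hb]
    dsimp only
    rw [Finset.sum_mul]
    apply Finset.sum_congr rfl
    intro y hy
    have hdy : d x y = t := (Finset.mem_filter.mp hy).2
    have hSe : {u : ℝ | u ∈ Set.Icc (0:ℝ) 1 ∧ pc Q d x y u < w}
        = {u : ℝ | u ∈ Set.Icc (0:ℝ) 1 ∧ A t + u * b t < w} := by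
      ext u
      rw [Set.mem_setOf_eq, Set.mem_setOf_eq, hpc y u, hdy]
    rw [hSe]
  rw [hgroup]
  have hterm : ∀ t ∈ T, b t *
        (volume {u : ℝ | u ∈ Set.Icc (0:ℝ) 1 ∧ A t + u * b t < w}).toReal
      = min w (∑ s ∈ T.filter (· ≤ t), b s) - min w (∑ s ∈ T.filter (· < t), b s) := by
    intro t _
    rw [← hAle, ← hAlt]
    exact vol_key (A t) (b t) w (hAnn t) (hbnn t) hw0
  rw [Finset.sum_congr rfl hterm, tele_sum (fun s => min w s) b T, htot]
  show min w 1 - min w 0 = w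
  rw [min_eq_left hw1, min_eq_right hw0]
  ring
end

section
/- Let M ≥ 2 be an integer and let X ~ P_X and Y₁, …, Y_M be independent with each Y_i ~ Q_Y. Then the expected distortion of the random code satisfies E[min_{1≤i≤M} d(X,Y_i)] = ∫₀¹ D̃(w,Q_Y) · M(M−1) w (1−w)^{M−2} dw. -/
open MeasureTheory

/-- The functional `D̃(w,Q) = w⁻¹ ⬝ E_{P ⊗ Q ⊗ Unif[0,1]}[ d(X,Y) ⬝ 1{p_c(X,Y,U) ≤ w} ]`. -/
noncomputable def Dtilde {X Y : Type*} [Fintype X] [Fintype Y]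
    (P : X → ℝ) (Q : Y → ℝ) (d : X → Y → ℝ) (w : ℝ) : ℝ :=
  w⁻¹ * ∑ x : X, ∑ y : Y, P x * Q y * d x y *
    (∫ u in Set.Icc (0:ℝ) 1, if pc Q d x y u ≤ w then (1:ℝ) else 0)

/-- Expansion of a power of a sum as a sum over functions. -/
lemma pow_sum_expand {Y : Type*} [Fintype Y] (g : Y → ℝ) (M : ℕ) :
    (∑ y : Y, g y) ^ M = ∑ f : Fin M → Y, ∏ i : Fin M, g (f i) := by
  have h1 : (∑ y : Y, g y) ^ M = ∏ _i : Fin M, (∑ y : Y, g y) := by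
    simp [Finset.prod_const]
  rw [h1]
  rw [Finset.prod_univ_sum (fun _ => Finset.univ) (fun _ y => g y)]
  simp [Fintype.piFinset_univ]

lemma comb {Y : Type*} [Fintype Y] (Q a : Y → ℝ) (M : ℕ)
    (H : (Finset.univ : Finset (Fin M)).Nonempty) :
    ∑ f : Fin M → Y, (∏ i : Fin M, Q (f i)) * (Finset.univ.inf' H fun i => a (f i))
    = ∑ v ∈ Finset.univ.image a,
        v * ((∑ y : Y, if v ≤ a y then Q y else 0) ^ M
             - (∑ y : Y, if v < a y then Q y else 0) ^ M) := by
  have hmem : ∀ f : Fin M → Y,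
      (Finset.univ.inf' H fun i => a (f i)) ∈ Finset.univ.image a := by
    intro f
    obtain ⟨i, _, hi⟩ := Finset.exists_mem_eq_inf' H (fun i => a (f i))
    rw [hi]
    exact Finset.mem_image_of_mem a (Finset.mem_univ (f i))
  have hA : ∀ v : ℝ, ∑ f : Fin M → Y, (if (∀ i, v ≤ a (f i)) then ∏ i, Q (f i) else 0)
      = (∑ y : Y, if v ≤ a y then Q y else 0) ^ M := by
    intro v
    rw [pow_sum_expand]
    refine Finset.sum_congr rfl fun f _ => ?_
    rw [Fintype.prod_ite_zero]
    congr
  have hB : ∀ v : ℝ, ∑ f : Fin M → Y, (if (∀ i, v < a (f i)) then ∏ i, Q (f i) else 0)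
      = (∑ y : Y, if v < a y then Q y else 0) ^ M := by
    intro v
    rw [pow_sum_expand]
    refine Finset.sum_congr rfl fun f _ => ?_
    rw [Fintype.prod_ite_zero]
    congr
  calc ∑ f : Fin M → Y, (∏ i : Fin M, Q (f i)) * (Finset.univ.inf' H fun i => a (f i))
      = ∑ f : Fin M → Y, ∑ v ∈ Finset.univ.image a,
          (∏ i : Fin M, Q (f i)) *
            (if (Finset.univ.inf' H fun i => a (f i)) = v then v else 0) := by
        refine Finset.sum_congr rfl fun f _ => ?_
        rw [← Finset.mul_sum]
        congr 1
        rw [Finset.sum_ite_eq (Finset.univ.image a)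
          ((Finset.univ.inf' H fun i => a (f i))) (fun v => v)]
        simp [hmem f]
    _ = ∑ v ∈ Finset.univ.image a, ∑ f : Fin M → Y,
          (∏ i : Fin M, Q (f i)) *
            (if (Finset.univ.inf' H fun i => a (f i)) = v then v else 0) :=
        Finset.sum_comm
    _ = ∑ v ∈ Finset.univ.image a,
        v * ((∑ y : Y, if v ≤ a y then Q y else 0) ^ M
             - (∑ y : Y, if v < a y then Q y else 0) ^ M) := by
        refine Finset.sum_congr rfl fun v _ => ?_
        rw [← hA v, ← hB v, ← Finset.sum_sub_distrib, Finset.mul_sum]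
        refine Finset.sum_congr rfl fun f _ => ?_
        have hle : ((∀ i, v ≤ a (f i)) ↔ v ≤ Finset.univ.inf' H fun i => a (f i)) := by
          rw [Finset.le_inf'_iff]; simp
        have hlt : ((∀ i, v < a (f i)) ↔ v < Finset.univ.inf' H fun i => a (f i)) := by
          rw [Finset.lt_inf'_iff]; simp
        rcases lt_trichotomy (Finset.univ.inf' H fun i => a (f i)) v with h | h | h
        · have h1 : ¬ (∀ i, v ≤ a (f i)) := fun hc => absurd (hle.1 hc) (not_le.2 h)
          have h2 : ¬ (∀ i, v < a (f i)) := fun hc => absurd (hlt.1 hc) (asymm h)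
          simp [h1, h2, h.ne]
        · have h2 : ¬ (∀ i, v < a (f i)) := fun hc => absurd (hlt.1 hc) (by simp [h])
          have h1 : (∀ i, v ≤ a (f i)) := hle.2 h.ge
          simp only [if_pos h1, if_neg h2, if_pos h, sub_zero]
          ring
        · have h1 : (∀ i, v ≤ a (f i)) := hle.2 h.le
          have h2 : (∀ i, v < a (f i)) := hlt.2 h
          simp [h1, h2, h.ne']

lemma regroup {Y : Type*} [Fintype Y] (Q a : Y → ℝ) (hQ0 : ∀ y, 0 ≤ Q y)
    (hQ1 : ∑ y : Y, Q y = 1) (M : ℕ) :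
    ∑ y : Y, Q y * a y *
      (((1 - ∑ y' : Y, if a y' < a y then Q y' else 0) ^ M
        - (1 - (∑ y' : Y, if a y' < a y then Q y' else 0)
             - (∑ y' : Y, if a y' = a y then Q y' else 0)) ^ M)
        / (∑ y' : Y, if a y' = a y then Q y' else 0))
    = ∑ v ∈ Finset.univ.image a,
        v * ((∑ y : Y, if v ≤ a y then Q y else 0) ^ M
             - (∑ y : Y, if v < a y then Q y else 0) ^ M) := by
  classical
  rw [← Finset.sum_fiberwise_of_maps_to (g := a) (t := Finset.univ.image a)
    (fun y _ => Finset.mem_image_of_mem a (Finset.mem_univ y))]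
  refine Finset.sum_congr rfl fun v _ => ?_
  -- abbreviations for the fiber sums at level v
  have key : ∀ y ∈ Finset.univ.filter (fun y => a y = v),
      Q y * a y *
        (((1 - ∑ y' : Y, if a y' < a y then Q y' else 0) ^ M
          - (1 - (∑ y' : Y, if a y' < a y then Q y' else 0)
               - (∑ y' : Y, if a y' = a y then Q y' else 0)) ^ M)
          / (∑ y' : Y, if a y' = a y then Q y' else 0))
      = Q y * (v *
          (((1 - ∑ y' : Y, if a y' < v then Q y' else 0) ^ M
            - (1 - (∑ y' : Y, if a y' < v then Q y' else 0)
                 - (∑ y' : Y, if a y' = v then Q y' else 0)) ^ M)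
            / (∑ y' : Y, if a y' = v then Q y' else 0))) := by
    intro y hy
    have hav : a y = v := (Finset.mem_filter.1 hy).2
    rw [hav]
    ring
  rw [Finset.sum_congr rfl key, ← Finset.sum_mul]
  -- `∑ y in fiber, Q y = Ev`
  have hfib : ∑ y ∈ Finset.univ.filter (fun y => a y = v), Q y
      = ∑ y' : Y, if a y' = v then Q y' else 0 := by
    rw [Finset.sum_filter]
  rw [hfib]
  set Lv := ∑ y' : Y, if a y' < v then Q y' else 0 with hLv
  set Ev := ∑ y' : Y, if a y' = v then Q y' else 0 with hEv
  have hge : (1 : ℝ) - Lv = ∑ y : Y, if v ≤ a y then Q y else 0 := by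
    rw [← hQ1, hLv, ← Finset.sum_sub_distrib]
    refine Finset.sum_congr rfl fun y _ => ?_
    rcases lt_trichotomy (a y) v with h | h | h
    · rw [if_pos h, if_neg (not_le.2 h)]; ring
    · rw [if_neg (by simp [h]), if_pos h.ge]; ring
    · rw [if_neg (asymm h), if_pos h.le]; ring
  have hgt : (1 : ℝ) - Lv - Ev = ∑ y : Y, if v < a y then Q y else 0 := by
    rw [← hQ1, hLv, hEv, ← Finset.sum_sub_distrib, ← Finset.sum_sub_distrib]
    refine Finset.sum_congr rfl fun y _ => ?_
    rcases lt_trichotomy (a y) v with h | h | h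
    · rw [if_pos h, if_neg (h.ne), if_neg (asymm h)]; ring
    · rw [if_neg (by simp [h]), if_pos h, if_neg (by simp [h])]; ring
    · rw [if_neg (asymm h), if_neg (h.ne'), if_pos h]; ring
  rw [← hge, ← hgt]
  by_cases hE : Ev = 0
  · rw [hE]
    simp
  · field_simp

lemma ftc_pow (k : ℕ) (p : ℝ) (hp : p ≤ 1) :
    ∫ w in Set.Icc p 1, (((k:ℝ)+1) * (1-w)^k) = (1-p)^(k+1) := by
  rw [MeasureTheory.integral_Icc_eq_integral_Ioc, ← intervalIntegral.integral_of_le hp]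
  have hderiv : ∀ w ∈ Set.uIcc p 1,
      HasDerivAt (fun w : ℝ => -(1-w)^(k+1)) (((k:ℝ)+1) * (1-w)^k) w := by
    intro w _
    have h1 : HasDerivAt (fun w : ℝ => 1 - w) (-1) w := (hasDerivAt_id w).const_sub 1
    have h2 : HasDerivAt (fun w : ℝ => -(1-w)^(k+1)) (-(((k+1:ℕ):ℝ) * (1-w)^(k+1-1) * -1)) w :=
      (h1.pow (k+1)).neg
    convert h2 using 1
    simp
  rw [intervalIntegral.integral_eq_sub_of_hasDerivAt hderiv
    (Continuous.intervalIntegrable (by continuity) _ _)]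
  simp

lemma ind_int (k : ℕ) (p : ℝ) (hp0 : 0 ≤ p) (hp1 : p ≤ 1) :
    ∫ w in Set.Icc (0:ℝ) 1, (if p ≤ w then (1:ℝ) else 0) * (((k:ℝ)+1) * (1-w)^k)
      = (1-p)^(k+1) := by
  have heq : (fun w => (if p ≤ w then (1:ℝ) else 0) * (((k:ℝ)+1)*(1-w)^k))
      = Set.indicator (Set.Ici p) (fun w => ((k:ℝ)+1)*(1-w)^k) := by
    funext w
    by_cases h : p ≤ w <;> simp [Set.indicator_apply, Set.mem_Ici, h]
  rw [heq, MeasureTheory.setIntegral_indicator measurableSet_Ici]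
  have hset : Set.Icc (0:ℝ) 1 ∩ Set.Ici p = Set.Icc p 1 := by
    ext w
    simp only [Set.mem_inter_iff, Set.mem_Icc, Set.mem_Ici]
    constructor
    · rintro ⟨⟨_, h1⟩, h2⟩; exact ⟨h2, h1⟩
    · rintro ⟨h0, h1⟩; exact ⟨⟨le_trans hp0 h0, h1⟩, h0⟩
  rw [hset]
  exact ftc_pow k p hp1

lemma int_u (k : ℕ) (L E : ℝ) (hE : E ≠ 0) :
    ∫ u in Set.Icc (0:ℝ) 1, (1 - L - u*E)^(k+1)
      = ((1-L)^(k+2) - (1-L-E)^(k+2)) / (((k:ℝ)+2) * E) := by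
  rw [MeasureTheory.integral_Icc_eq_integral_Ioc,
    ← intervalIntegral.integral_of_le (zero_le_one (α := ℝ))]
  have hderiv : ∀ u ∈ Set.uIcc (0:ℝ) 1,
      HasDerivAt (fun u : ℝ => -((1 - L - u*E)^(k+2) / (((k:ℝ)+2)*E)))
        ((1 - L - u*E)^(k+1)) u := by
    intro u _
    have h1 : HasDerivAt (fun u : ℝ => 1 - L - u*E) (-E) u :=
      (hasDerivAt_mul_const E).const_sub (1-L)
    have h2 : HasDerivAt (fun u : ℝ => -((1 - L - u*E)^(k+2) / (((k:ℝ)+2)*E)))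
        (-((((k+2:ℕ):ℝ) * (1 - L - u*E)^(k+2-1) * -E) / (((k:ℝ)+2)*E))) u :=
      ((h1.pow (k+2)).div_const (((k:ℝ)+2)*E)).neg
    convert h2 using 1
    have hk : ((k:ℝ)+2) ≠ 0 := by positivity
    rw [show k+2-1 = k+1 from rfl]; push_cast
    field_simp
  rw [intervalIntegral.integral_eq_sub_of_hasDerivAt hderiv
    (Continuous.intervalIntegrable (by continuity) _ _)]
  simp only [one_mul, zero_mul, mul_zero, sub_zero]
  ring

lemma int_u0 (k : ℕ) (L : ℝ) :
    ∫ u in Set.Icc (0:ℝ) 1, (1 - L - u*0)^(k+1) = (1-L)^(k+1) := by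
  simp [MeasureTheory.setIntegral_const, Real.volume_Icc]
lemma finIcc : IsFiniteMeasure (volume.restrict (Set.Icc (0:ℝ) 1)) := by
  constructor
  rw [Measure.restrict_apply_univ, Real.volume_Icc]
  simp

lemma ind_meas (L E w : ℝ) :
    Measurable (fun u : ℝ => if L + u*E ≤ w then (1:ℝ) else 0) := by
  refine Measurable.ite ?_ measurable_const measurable_const
  exact (isClosed_le (by continuity) continuous_const).measurableSet

lemma ind_integrable (L E w : ℝ) :
    Integrable (fun u : ℝ => if L + u*E ≤ w then (1:ℝ) else 0)
      (volume.restrict (Set.Icc (0:ℝ) 1)) := by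
  haveI := finIcc
  refine (integrable_const (1:ℝ)).mono' (ind_meas L E w).aestronglyMeasurable ?_
  refine Filter.Eventually.of_forall fun u => ?_
  by_cases h : L + u*E ≤ w <;> simp [h]

lemma fub (k : ℕ) (L E : ℝ) (hL : 0 ≤ L) (hE : 0 ≤ E) (hLE : L + E ≤ 1) :
    ∫ w in Set.Icc (0:ℝ) 1,
      (∫ u in Set.Icc (0:ℝ) 1, (if L + u*E ≤ w then (1:ℝ) else 0))
        * (((k:ℝ)+2)*((k:ℝ)+1)*(1-w)^k)
    = ((k:ℝ)+2) * ∫ u in Set.Icc (0:ℝ) 1, (1-L-u*E)^(k+1) := by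
  haveI := finIcc
  set μ := volume.restrict (Set.Icc (0:ℝ) 1) with hμ
  have hstep1 : ∀ w : ℝ,
      (∫ u, (if L + u*E ≤ w then (1:ℝ) else 0) ∂μ) * (((k:ℝ)+2)*((k:ℝ)+1)*(1-w)^k)
      = ∫ u, (if L + u*E ≤ w then (1:ℝ) else 0) * (((k:ℝ)+2)*((k:ℝ)+1)*(1-w)^k) ∂μ := by
    intro w
    rw [integral_mul_const]
  calc ∫ w, (∫ u, (if L + u*E ≤ w then (1:ℝ) else 0) ∂μ)
          * (((k:ℝ)+2)*((k:ℝ)+1)*(1-w)^k) ∂μ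
      = ∫ w, ∫ u, (if L + u*E ≤ w then (1:ℝ) else 0)
          * (((k:ℝ)+2)*((k:ℝ)+1)*(1-w)^k) ∂μ ∂μ := by
        refine integral_congr_ae (Filter.Eventually.of_forall fun w => hstep1 w)
    _ = ∫ u, ∫ w, (if L + u*E ≤ w then (1:ℝ) else 0)
          * (((k:ℝ)+2)*((k:ℝ)+1)*(1-w)^k) ∂μ ∂μ := by
        apply MeasureTheory.integral_integral_swap
        have hmeas : Measurable (Function.uncurry fun w u =>
            (if L + u*E ≤ w then (1:ℝ) else 0) * (((k:ℝ)+2)*((k:ℝ)+1)*(1-w)^k)) := by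
          refine Measurable.mul ?_ ?_
          · refine Measurable.ite ?_ measurable_const measurable_const
            exact (isClosed_le (by continuity) (by continuity)).measurableSet
          · exact ((continuous_const.mul
              ((continuous_const.sub continuous_fst).pow k)).measurable)
        refine (integrable_const (((k:ℝ)+2)*((k:ℝ)+1))).mono'
          hmeas.aestronglyMeasurable ?_
        rw [Measure.prod_restrict]
        filter_upwards [ae_restrict_mem (measurableSet_Icc.prod measurableSet_Icc)]
          with p hp
        obtain ⟨hp1, hp2⟩ := hp
        simp only [Set.mem_Icc] at hp1 hp2
        have h1 : |(1 - p.1)| ≤ 1 := by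
          rw [abs_le]; constructor <;> linarith [hp1.1, hp1.2]
        have h2 : |(1 - p.1)^k| ≤ 1 := by
          rw [abs_pow]; exact pow_le_one₀ (abs_nonneg _) h1
        have h3 : |(if L + p.2*E ≤ p.1 then (1:ℝ) else 0)| ≤ 1 := by
          split_ifs <;> simp
        have hC : (0:ℝ) ≤ ((k:ℝ)+2)*((k:ℝ)+1) := by positivity
        calc ‖(if L + p.2*E ≤ p.1 then (1:ℝ) else 0)
                * (((k:ℝ)+2)*((k:ℝ)+1)*(1-p.1)^k)‖
            = |(if L + p.2*E ≤ p.1 then (1:ℝ) else 0)|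
                * (((k:ℝ)+2)*((k:ℝ)+1) * |(1-p.1)^k|) := by
              rw [Real.norm_eq_abs, abs_mul, abs_mul, abs_of_nonneg hC]
          _ ≤ 1 * (((k:ℝ)+2)*((k:ℝ)+1) * 1) := by
              refine mul_le_mul h3 ?_ (by positivity) zero_le_one
              refine mul_le_mul_of_nonneg_left h2 hC
          _ = ((k:ℝ)+2)*((k:ℝ)+1) := by ring
    _ = ∫ u, ((k:ℝ)+2) * (1-L-u*E)^(k+1) ∂μ := by
        rw [hμ]
        refine setIntegral_congr_fun measurableSet_Icc fun u hu => ?_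
        obtain ⟨hu0, hu1⟩ := hu
        have hp0 : 0 ≤ L + u*E := by nlinarith
        have hp1 : L + u*E ≤ 1 := by nlinarith
        have := ind_int k (L + u*E) hp0 hp1
        calc ∫ w, (if L + u*E ≤ w then (1:ℝ) else 0)
                * (((k:ℝ)+2)*((k:ℝ)+1)*(1-w)^k) ∂(volume.restrict (Set.Icc (0:ℝ) 1))
            = ((k:ℝ)+2) * ∫ w in Set.Icc (0:ℝ) 1,
                (if L + u*E ≤ w then (1:ℝ) else 0) * (((k:ℝ)+1)*(1-w)^k) := by
              rw [← integral_const_mul]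
              congr 1
              funext w
              ring
          _ = ((k:ℝ)+2) * (1 - (L + u*E))^(k+1) := by rw [this]
          _ = ((k:ℝ)+2) * (1 - L - u*E)^(k+1) := by ring_nf
    _ = ((k:ℝ)+2) * ∫ u, (1-L-u*E)^(k+1) ∂μ := by rw [integral_const_mul]

/-- The integral `I(w) = ∫₀¹ 1{L + uE ≤ w} du`. -/
noncomputable def If (L E w : ℝ) : ℝ :=
  ∫ u in Set.Icc (0:ℝ) 1, if L + u*E ≤ w then (1:ℝ) else 0

lemma finIcc' : IsFiniteMeasure (volume.restrict (Set.Icc (0:ℝ) 1)) := by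
  constructor
  rw [Measure.restrict_apply_univ, Real.volume_Icc]
  simp

lemma ind_meas' (L E w : ℝ) :
    Measurable (fun u : ℝ => if L + u*E ≤ w then (1:ℝ) else 0) := by
  refine Measurable.ite ?_ measurable_const measurable_const
  exact (isClosed_le (by continuity) continuous_const).measurableSet

lemma ind_integrable' (L E w : ℝ) :
    Integrable (fun u : ℝ => if L + u*E ≤ w then (1:ℝ) else 0)
      (volume.restrict (Set.Icc (0:ℝ) 1)) := by
  haveI := finIcc'
  refine (integrable_const (1:ℝ)).mono' (ind_meas' L E w).aestronglyMeasurable ?_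
  refine Filter.Eventually.of_forall fun u => ?_
  by_cases h : L + u*E ≤ w <;> simp [h]

lemma If_mono (L E : ℝ) : Monotone (If L E) := by
  intro w w' hww'
  refine integral_mono (ind_integrable' L E w) (ind_integrable' L E w') fun u => ?_
  dsimp only
  by_cases h : L + u*E ≤ w
  · rw [if_pos h, if_pos (h.trans hww')]
  · rw [if_neg h]
    split_ifs <;> norm_num

lemma If_norm (L E w : ℝ) : ‖If L E w‖ ≤ 1 := by
  have h := norm_setIntegral_le_of_norm_le_const (μ := volume) (C := 1)
    (s := Set.Icc (0:ℝ) 1)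
    (f := fun u => if L + u*E ≤ w then (1:ℝ) else 0)
    (by rw [Real.volume_Icc]; simp)
    (fun u _ => by by_cases h : L + u*E ≤ w <;> simp [h])
  calc ‖If L E w‖ ≤ 1 * (volume (Set.Icc (0:ℝ) 1)).toReal := h
    _ = 1 := by rw [Real.volume_Icc]; simp

lemma Ig_integrable (k : ℕ) (L E : ℝ) :
    Integrable (fun w => If L E w * (((k:ℝ)+2)*((k:ℝ)+1)*(1-w)^k))
      (volume.restrict (Set.Icc (0:ℝ) 1)) := by
  haveI := finIcc'
  refine (integrable_const (((k:ℝ)+2)*((k:ℝ)+1))).mono' ?_ ?_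
  · exact ((If_mono L E).measurable.mul (by continuity :
      Continuous fun w : ℝ => ((k:ℝ)+2)*((k:ℝ)+1)*(1-w)^k).measurable).aestronglyMeasurable
  · filter_upwards [ae_restrict_mem measurableSet_Icc] with w hw
    obtain ⟨hw0, hw1⟩ := hw
    have h1 : |(1 - w)| ≤ 1 := by rw [abs_le]; constructor <;> linarith
    have h2 : |(1 - w)^k| ≤ 1 := by rw [abs_pow]; exact pow_le_one₀ (abs_nonneg _) h1
    have hC : (0:ℝ) ≤ ((k:ℝ)+2)*((k:ℝ)+1) := by positivity
    calc ‖If L E w * (((k:ℝ)+2)*((k:ℝ)+1)*(1-w)^k)‖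
        = ‖If L E w‖ * (((k:ℝ)+2)*((k:ℝ)+1) * |(1-w)^k|) := by
          rw [norm_mul, Real.norm_eq_abs (((k:ℝ)+2)*((k:ℝ)+1)*(1-w)^k), abs_mul,
            abs_of_nonneg hC]
      _ ≤ 1 * (((k:ℝ)+2)*((k:ℝ)+1) * 1) := by
          refine mul_le_mul (If_norm L E w) ?_ (by positivity) zero_le_one
          exact mul_le_mul_of_nonneg_left h2 hC
      _ = ((k:ℝ)+2)*((k:ℝ)+1) := by ring

/-- Exact performance of random coding: with `M ≥ 2` i.i.d. codewords `Y₁,…,Y_M ~ Q` and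
`X ~ P` independent, `E[min_i d(X,Y_i)] = ∫₀¹ D̃(w,Q) · M(M−1) w (1−w)^{M−2} dw`. -/
theorem random_coding_exact {X Y : Type*} [Fintype X] [Fintype Y] [Nonempty X] [Nonempty Y]
    (P : X → ℝ) (hP0 : ∀ x, 0 ≤ P x) (hP1 : ∑ x : X, P x = 1)
    (Q : Y → ℝ) (hQ0 : ∀ y, 0 ≤ Q y) (hQ1 : ∑ y : Y, Q y = 1)
    (d : X → Y → ℝ) (hd : ∀ x y, 0 ≤ d x y)
    (M : ℕ) (hM : 2 ≤ M) :
    ∑ x : X, P x * ∑ f : Fin M → Y, (∏ i : Fin M, Q (f i)) *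
        ((Finset.univ : Finset (Fin M)).inf' ⟨⟨0, by omega⟩, Finset.mem_univ _⟩
          fun i => d x (f i))
    = ∫ w in Set.Icc (0:ℝ) 1,
        Dtilde P Q d w * ((M:ℝ) * ((M:ℝ) - 1) * w * (1 - w) ^ (M - 2)) := by
  obtain ⟨k, rfl⟩ : ∃ k, M = k + 2 := ⟨M - 2, by omega⟩
  haveI := finIcc'
  have hL0 : ∀ x y, 0 ≤ ∑ y' : Y, (if d x y' < d x y then Q y' else 0) := fun x y =>
    Finset.sum_nonneg fun y' _ => by split_ifs; exacts [hQ0 y', le_refl 0]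
  have hE0 : ∀ x y, 0 ≤ ∑ y' : Y, (if d x y' = d x y then Q y' else 0) := fun x y =>
    Finset.sum_nonneg fun y' _ => by split_ifs; exacts [hQ0 y', le_refl 0]
  have hLE : ∀ x y, (∑ y' : Y, (if d x y' < d x y then Q y' else 0))
      + (∑ y' : Y, (if d x y' = d x y then Q y' else 0)) ≤ 1 := by
    intro x y
    rw [← Finset.sum_add_distrib, ← hQ1]
    refine Finset.sum_le_sum fun y' _ => ?_
    rcases lt_trichotomy (d x y') (d x y) with h | h | h
    · rw [if_pos h, if_neg h.ne]; simp
    · rw [if_neg (by simp [h]), if_pos h]; simp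
    · rw [if_neg (asymm h), if_neg h.ne']; simp [hQ0 y']
  have hQE : ∀ x y, Q y ≤ ∑ y' : Y, (if d x y' = d x y then Q y' else 0) := by
    intro x y
    have h := Finset.single_le_sum (f := fun y' => if d x y' = d x y then Q y' else 0)
      (fun y' _ => by split_ifs; exacts [hQ0 y', le_refl 0]) (Finset.mem_univ y)
    simpa using h
  have h0ae : ∀ᵐ w : ℝ, w ≠ (0:ℝ) := by
    rw [MeasureTheory.ae_iff]
    simpa using measure_singleton (0:ℝ)
  symm
  calc ∫ w in Set.Icc (0:ℝ) 1,
        Dtilde P Q d w * ((((k+2:ℕ)):ℝ) * ((((k+2:ℕ)):ℝ) - 1) * w * (1 - w) ^ ((k+2) - 2))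
      = ∫ w in Set.Icc (0:ℝ) 1, ∑ x : X, ∑ y : Y, P x * Q y * d x y *
          ((∫ u in Set.Icc (0:ℝ) 1, if pc Q d x y u ≤ w then (1:ℝ) else 0) *
            (((k:ℝ)+2)*((k:ℝ)+1)*(1-w)^k)) := by
        refine setIntegral_congr_ae measurableSet_Icc ?_
        filter_upwards [h0ae] with w hw _
        simp only [Dtilde, Nat.add_sub_cancel]
        push_cast
        have hS : ∀ S : ℝ,
            w⁻¹ * S * (((k:ℝ)+2) * (((k:ℝ)+2) - 1) * w * (1 - w) ^ k)
            = S * (((k:ℝ)+2)*((k:ℝ)+1)*(1-w)^k) := by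
          intro S; field_simp; ring
        rw [hS, Finset.sum_mul]
        refine Finset.sum_congr rfl fun x _ => ?_
        rw [Finset.sum_mul]
        refine Finset.sum_congr rfl fun y _ => ?_
        ring
    _ = ∑ x : X, ∑ y : Y, ∫ w in Set.Icc (0:ℝ) 1, P x * Q y * d x y *
          ((∫ u in Set.Icc (0:ℝ) 1, if pc Q d x y u ≤ w then (1:ℝ) else 0) *
            (((k:ℝ)+2)*((k:ℝ)+1)*(1-w)^k)) := by
        rw [integral_finset_sum]
        · refine Finset.sum_congr rfl fun x _ => ?_
          rw [integral_finset_sum]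
          intro y _
          exact (Ig_integrable k (∑ y' : Y, if d x y' < d x y then Q y' else 0)
            (∑ y' : Y, if d x y' = d x y then Q y' else 0)).const_mul (P x * Q y * d x y)
        · intro x _
          refine integrable_finset_sum _ fun y _ => ?_
          exact (Ig_integrable k (∑ y' : Y, if d x y' < d x y then Q y' else 0)
            (∑ y' : Y, if d x y' = d x y then Q y' else 0)).const_mul (P x * Q y * d x y)
    _ = ∑ x : X, ∑ y : Y, P x * (Q y * d x y *
          (((1 - ∑ y' : Y, if d x y' < d x y then Q y' else 0) ^ (k+2)
            - (1 - (∑ y' : Y, if d x y' < d x y then Q y' else 0)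
                 - (∑ y' : Y, if d x y' = d x y then Q y' else 0)) ^ (k+2))
            / (∑ y' : Y, if d x y' = d x y then Q y' else 0))) := by
        refine Finset.sum_congr rfl fun x _ => Finset.sum_congr rfl fun y _ => ?_
        rw [MeasureTheory.integral_const_mul]
        simp only [pc]
        erw [fub k _ _ (hL0 x y) (hE0 x y) (hLE x y)]
        by_cases hE : (∑ y' : Y, if d x y' = d x y then Q y' else 0) = 0
        · have hQy : Q y = 0 := le_antisymm (hE ▸ hQE x y) (hQ0 y)
          simp [hQy]
        · rw [int_u k _ _ hE]
          have hk : ((k:ℝ)+2) ≠ 0 := by positivity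
          field_simp
    _ = ∑ x : X, P x * ∑ f : Fin (k+2) → Y, (∏ i : Fin (k+2), Q (f i)) *
        ((Finset.univ : Finset (Fin (k+2))).inf' ⟨⟨0, by omega⟩, Finset.mem_univ _⟩
          fun i => d x (f i)) := by
        refine Finset.sum_congr rfl fun x _ => ?_
        rw [← Finset.mul_sum]
        congr 1
        rw [regroup Q (d x) hQ0 hQ1 (k+2)]
        exact (comb Q (d x) (k+2) ⟨⟨0, by omega⟩, Finset.mem_univ _⟩).symm
end

section
/- For every w ∈ (0,1] and x ∈ 𝒳, define W^w(y|x) := w⁻¹ · Q_Y(y) · Leb{u ∈ [0,1] : p_c(x,y,u) ≤ w}, where Leb is Lebesgue measure on [0,1]. Then for each x ∈ 𝒳, y ↦ W^w(y|x) is a probability mass function on 𝒴 (i.e., Σ_{y∈𝒴} W^w(y|x) = 1), and D̃(w,Q_Y) = Σ_{x∈𝒳} Σ_{y∈𝒴} P_X(x) W^w(y|x) d(x,y). -/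
open MeasureTheory

lemma sum_telescope (m W : ℝ → ℝ) (S : Finset ℝ) :
    ∑ t ∈ S, (m (∑ s ∈ S.filter (fun s => s ≤ t), W s)
      - m (∑ s ∈ S.filter (fun s => s < t), W s))
    = m (∑ s ∈ S, W s) - m 0 := by
  induction S using Finset.induction_on_max with
  | empty => simp
  | insert a S' hlt ih =>
    have ha : a ∉ S' := fun h => lt_irrefl a (hlt a h)
    rw [Finset.sum_insert ha]
    have h1 : (insert a S').filter (fun s => s ≤ a) = insert a S' := by
      apply Finset.filter_true_of_mem
      intro s hs
      rcases Finset.mem_insert.mp hs with h | h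
      · exact le_of_eq h
      · exact le_of_lt (hlt s h)
    have h2 : (insert a S').filter (fun s => s < a) = S' := by
      rw [Finset.filter_insert, if_neg (lt_irrefl a)]
      exact Finset.filter_true_of_mem (fun s hs => hlt s hs)
    rw [h1, h2]
    have h3 : ∑ t ∈ S', (m (∑ s ∈ (insert a S').filter (fun s => s ≤ t), W s)
        - m (∑ s ∈ (insert a S').filter (fun s => s < t), W s))
        = ∑ t ∈ S', (m (∑ s ∈ S'.filter (fun s => s ≤ t), W s)
        - m (∑ s ∈ S'.filter (fun s => s < t), W s)) := by
      apply Finset.sum_congr rfl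
      intro t ht
      rw [Finset.filter_insert, if_neg (not_le.mpr (hlt t ht)),
        Finset.filter_insert, if_neg (not_lt.mpr (le_of_lt (hlt t ht)))]
    rw [h3, ih]
    ring

lemma aux_vol (w a b : ℝ) (hb : 0 ≤ b) (hw : 0 < w) :
    b * (volume {u : ℝ | u ∈ Set.Icc (0:ℝ) 1 ∧ a + u * b ≤ w}).toReal
      = min w (a + b) - min w a := by
  rcases eq_or_lt_of_le hb with hb0 | hb0
  · simp [← hb0]
  · have hset : {u : ℝ | u ∈ Set.Icc (0:ℝ) 1 ∧ a + u * b ≤ w}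
        = Set.Icc 0 (min 1 ((w - a)/b)) := by
      ext u
      simp only [Set.mem_setOf_eq, Set.mem_Icc, le_min_iff]
      constructor
      · rintro ⟨⟨h0, h1⟩, h2⟩
        exact ⟨h0, h1, by rw [le_div_iff₀ hb0]; linarith⟩
      · rintro ⟨h0, h1, h2⟩
        rw [le_div_iff₀ hb0] at h2
        exact ⟨⟨h0, h1⟩, by linarith⟩
    rw [hset, Real.volume_Icc]
    rcases le_or_gt w a with hwa | hwa
    · have hn : min 1 ((w - a)/b) - 0 ≤ 0 := by
        rw [sub_zero]
        exact le_trans (min_le_right _ _)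
          (div_nonpos_of_nonpos_of_nonneg (by linarith) hb)
      rw [ENNReal.ofReal_of_nonpos hn]
      have h1 : min w (a + b) = w := min_eq_left (by linarith)
      have h2 : min w a = w := min_eq_left hwa
      simp [h1, h2]
    · rcases le_or_gt w (a + b) with hwb | hwb
      · have hm : min 1 ((w - a)/b) = (w - a)/b := by
          apply min_eq_right
          rw [div_le_one hb0]; linarith
        rw [hm, sub_zero, ENNReal.toReal_ofReal (by apply div_nonneg <;> linarith)]
        rw [min_eq_left hwb, min_eq_right (le_of_lt hwa)]
        field_simp
      · have hm : min 1 ((w - a)/b) = 1 := by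
          apply min_eq_left
          rw [le_div_iff₀ hb0]; linarith
        rw [hm, sub_zero, ENNReal.toReal_ofReal zero_le_one]
        rw [min_eq_right (by linarith), min_eq_right (le_of_lt hwa)]
        ring

lemma integral_ind (a b w : ℝ) :
    (∫ u in Set.Icc (0:ℝ) 1, if a + u * b ≤ w then (1:ℝ) else 0)
      = (volume {u : ℝ | u ∈ Set.Icc (0:ℝ) 1 ∧ a + u * b ≤ w}).toReal := by
  have hs : MeasurableSet {u : ℝ | a + u * b ≤ w} :=
    measurableSet_le (by fun_prop) measurable_const
  have h1 : (fun u : ℝ => if a + u * b ≤ w then (1:ℝ) else 0)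
      = Set.indicator {u : ℝ | a + u * b ≤ w} (fun _ => (1:ℝ)) := by
    ext u
    by_cases h : a + u * b ≤ w <;> simp [Set.indicator, h]
  rw [h1, MeasureTheory.setIntegral_indicator hs, MeasureTheory.setIntegral_const]
  have h2 : Set.Icc (0:ℝ) 1 ∩ {u : ℝ | a + u * b ≤ w}
      = {u : ℝ | u ∈ Set.Icc (0:ℝ) 1 ∧ a + u * b ≤ w} := rfl
  rw [h2]
  simp
  rfl


lemma key {Y : Type*} [Fintype Y]
    (Q : Y → ℝ) (hQ0 : ∀ y, 0 ≤ Q y) (hQ1 : ∑ y : Y, Q y = 1)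
    (v : Y → ℝ) (w : ℝ) (hw0 : 0 < w) (hw1 : w ≤ 1) :
    ∑ y : Y, Q y * (volume {u : ℝ | u ∈ Set.Icc (0:ℝ) 1 ∧
        (∑ y' : Y, if v y' < v y then Q y' else 0)
        + u * (∑ y' : Y, if v y' = v y then Q y' else 0) ≤ w}).toReal = w := by
  classical
  set S : Finset ℝ := Finset.image v Finset.univ with hS
  set W : ℝ → ℝ := fun t => ∑ y ∈ Finset.univ.filter (fun y => v y = t), Q y with hW
  -- fiberwise sums
  have hfib : ∀ (p : ℝ → Prop) [DecidablePred p],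
      ∑ y ∈ Finset.univ.filter (fun y => p (v y)), Q y = ∑ s ∈ S.filter p, W s := by
    intro p hp
    rw [← Finset.sum_fiberwise_of_maps_to (g := v)
      (t := S.filter p) (s := Finset.univ.filter (fun y => p (v y)))
      (fun y hy => by
        simp only [Finset.mem_filter, Finset.mem_univ, true_and] at hy
        exact Finset.mem_filter.mpr ⟨Finset.mem_image_of_mem v (Finset.mem_univ y), hy⟩)]
    apply Finset.sum_congr rfl
    intro s hs
    have hps : p s := (Finset.mem_filter.mp hs).2
    rw [Finset.filter_filter]
    apply Finset.sum_congr _ (fun _ _ => rfl)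
    apply Finset.filter_congr
    intro y _
    constructor
    · exact fun h => h.2
    · exact fun h => ⟨by rw [h]; exact hps, h⟩
  -- the volume function
  set V : ℝ → ℝ := fun t => (volume {u : ℝ | u ∈ Set.Icc (0:ℝ) 1 ∧
      (∑ y' : Y, if v y' < t then Q y' else 0)
      + u * (∑ y' : Y, if v y' = t then Q y' else 0) ≤ w}).toReal with hV
  have hgoal : ∑ y : Y, Q y * (volume {u : ℝ | u ∈ Set.Icc (0:ℝ) 1 ∧
        (∑ y' : Y, if v y' < v y then Q y' else 0)
        + u * (∑ y' : Y, if v y' = v y then Q y' else 0) ≤ w}).toReal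
      = ∑ y : Y, Q y * V (v y) := rfl
  rw [hgoal]
  rw [← Finset.sum_fiberwise_of_maps_to (g := v) (t := S)
    (s := Finset.univ) (f := fun y => Q y * V (v y))
    (fun y _ => Finset.mem_image_of_mem v (Finset.mem_univ y))]
  have hstep : ∀ t ∈ S, (∑ y ∈ Finset.univ.filter (fun y => v y = t), Q y * V (v y))
      = (min w (∑ s ∈ S.filter (fun s => s ≤ t), W s)
        - min w (∑ s ∈ S.filter (fun s => s < t), W s)) := by
    intro t ht
    have h1 : (∑ y ∈ Finset.univ.filter (fun y => v y = t), Q y * V (v y))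
        = W t * V t := by
      rw [hW, Finset.sum_mul]
      apply Finset.sum_congr rfl
      intro y hy
      rw [(Finset.mem_filter.mp hy).2]
    rw [h1]
    have hWb : W t = ∑ y' : Y, if v y' = t then Q y' else 0 := by
      rw [hW]; simp [Finset.sum_filter]
    have hA : (∑ y' : Y, if v y' < t then Q y' else 0)
        = ∑ s ∈ S.filter (fun s => s < t), W s := by
      rw [← hfib (fun s => s < t)]
      simp [Finset.sum_filter]
    have hC : (∑ y' : Y, if v y' < t then Q y' else 0)
        + (∑ y' : Y, if v y' = t then Q y' else 0)
        = ∑ s ∈ S.filter (fun s => s ≤ t), W s := by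
      rw [← hfib (fun s => s ≤ t)]
      rw [← Finset.sum_add_distrib]
      rw [Finset.sum_filter]
      apply Finset.sum_congr rfl
      intro y _
      by_cases hlt : v y < t
      · rw [if_pos hlt, if_neg (ne_of_lt hlt), if_pos hlt.le]; ring
      · by_cases heq : v y = t
        · rw [if_neg hlt, if_pos heq, if_pos heq.le]; ring
        · rw [if_neg hlt, if_neg heq,
            if_neg (fun hle => (lt_or_eq_of_le hle).elim hlt heq)]; ring
    have hb : (0:ℝ) ≤ ∑ y' : Y, if v y' = t then Q y' else 0 := by
      apply Finset.sum_nonneg; intro y _; split_ifs; exacts [hQ0 y, le_refl 0]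
    rw [hWb, hV]
    rw [aux_vol w _ _ hb hw0, hC, hA]
  rw [Finset.sum_congr rfl hstep, sum_telescope (fun r => min w r) W S]
  have hSW : ∑ s ∈ S, W s = 1 := by
    rw [← hQ1]
    have := hfib (fun _ => True)
    simpa using this.symm
  rw [hSW, min_eq_left hw1, min_eq_right hw0.le, sub_zero]

/-- The channel `W^w(y|x) = w⁻¹ Q(y) Leb{u ∈ [0,1] : p_c(x,y,u) ≤ w}` is a probability
mass function on `Y` for every `x`, and `D̃(w,Q) = Σ_x Σ_y P(x) W^w(y|x) d(x,y)`. -/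
theorem channel_Ww {X Y : Type*} [Fintype X] [Fintype Y] [Nonempty X] [Nonempty Y]
    (P : X → ℝ) (hP0 : ∀ x, 0 ≤ P x) (hP1 : ∑ x : X, P x = 1)
    (Q : Y → ℝ) (hQ0 : ∀ y, 0 ≤ Q y) (hQ1 : ∑ y : Y, Q y = 1)
    (d : X → Y → ℝ) (hd : ∀ x y, 0 ≤ d x y)
    (w : ℝ) (hw : w ∈ Set.Ioc (0:ℝ) 1) :
    (∀ x : X, ∑ y : Y, w⁻¹ * Q y *
        (volume {u : ℝ | u ∈ Set.Icc (0:ℝ) 1 ∧ pc Q d x y u ≤ w}).toReal = 1)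
    ∧ Dtilde P Q d w = ∑ x : X, ∑ y : Y, P x * (w⁻¹ * Q y *
        (volume {u : ℝ | u ∈ Set.Icc (0:ℝ) 1 ∧ pc Q d x y u ≤ w}).toReal) * d x y := by
  obtain ⟨hw0, hw1⟩ := hw
  have hkey : ∀ x : X, ∑ y : Y, Q y *
      (volume {u : ℝ | u ∈ Set.Icc (0:ℝ) 1 ∧ pc Q d x y u ≤ w}).toReal = w := by
    intro x
    have h := key Q hQ0 hQ1 (d x) w hw0 hw1
    simp only [pc]
    exact h
  constructor
  · intro x
    have : ∑ y : Y, w⁻¹ * Q y *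
        (volume {u : ℝ | u ∈ Set.Icc (0:ℝ) 1 ∧ pc Q d x y u ≤ w}).toReal
        = w⁻¹ * ∑ y : Y, Q y *
        (volume {u : ℝ | u ∈ Set.Icc (0:ℝ) 1 ∧ pc Q d x y u ≤ w}).toReal := by
      rw [Finset.mul_sum]
      apply Finset.sum_congr rfl
      intro y _
      ring
    rw [this, hkey x, inv_mul_cancel₀ (ne_of_gt hw0)]
  · rw [Dtilde]
    have hint : ∀ (x : X) (y : Y),
        (∫ u in Set.Icc (0:ℝ) 1, if pc Q d x y u ≤ w then (1:ℝ) else 0)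
        = (volume {u : ℝ | u ∈ Set.Icc (0:ℝ) 1 ∧ pc Q d x y u ≤ w}).toReal := by
      intro x y
      simp only [pc]
      exact integral_ind _ _ w
    rw [Finset.mul_sum]
    apply Finset.sum_congr rfl
    intro x _
    rw [Finset.mul_sum]
    apply Finset.sum_congr rfl
    intro y _
    rw [hint x y]
    ring
end

section
/- Let C ⊆ 𝒴 be a nonempty code with |C| = M, let Q^C be the uniform probability mass function on C (Q^C(y) = 1/M for y ∈ C, and 0 otherwise), and let p_c be the pairwise correct probability defined with Q^C in place of Q_Y. Then for every x ∈ 𝒳 and every y ∈ 𝒴: M · Q^C(y) · Leb{u ∈ [0,1] : p_c(x,y,u) ≤ 1/M} = (1/k(x)) · 1{ y ∈ C and d(x,y) = min_{c∈C} d(x,c) }, where k(x) := |{ c ∈ C : d(x,c) = min_{c'∈C} d(x,c') }| and Leb is Lebesgue measure on [0,1]. That is, the channel W^{1/M} coincides with the optimal encoder of 𝒳 into C that maps x uniformly at random to a codeword of minimal distortion. -/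
open MeasureTheory

/-- For a code `C` of size `M` with uniform pmf `Q^C`, the channel `W^{1/M}` coincides with
the optimal encoder: `M · Q^C(y) · Leb{u ∈ [0,1] : p_c(x,y,u) ≤ 1/M}` equals
`(1/k(x)) · 1{y ∈ C and d(x,y) = min_{c ∈ C} d(x,c)}`, where `k(x)` is the number of
codewords of minimal distortion. -/
theorem optimal_encoder {X Y : Type*} [Fintype X] [Fintype Y] [Nonempty X] [Nonempty Y]
    [DecidableEq Y]
    (P : X → ℝ) (hP0 : ∀ x, 0 ≤ P x) (hP1 : ∑ x : X, P x = 1)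
    (d : X → Y → ℝ) (hd : ∀ x y, 0 ≤ d x y)
    (C : Finset Y) (hC : C.Nonempty) (M : ℕ) (hM : M = C.card)
    (x : X) (y : Y) :
    (M : ℝ) * (if y ∈ C then 1 / (M : ℝ) else 0) *
        (volume {u : ℝ | u ∈ Set.Icc (0:ℝ) 1 ∧
          pc (fun y' => if y' ∈ C then 1 / (M : ℝ) else 0) d x y u ≤ 1 / (M : ℝ)}).toReal
      = (1 / ((C.filter fun c => d x c = C.inf' hC fun c => d x c).card : ℝ)) *
        (if y ∈ C ∧ d x y = C.inf' hC (fun c => d x c) then 1 else 0) := by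
  have hM0 : 0 < M := by rw [hM]; exact Finset.card_pos.mpr hC
  have hMR : (0:ℝ) < (M:ℝ) := Nat.cast_pos.mpr hM0
  set Q : Y → ℝ := fun y' => if y' ∈ C then 1 / (M:ℝ) else 0 with hQ
  by_cases hy : y ∈ C
  · set m := C.inf' hC fun c => d x c with hm
    set k := (C.filter fun c => d x c = m).card with hk
    have hk0 : 0 < k := by
      obtain ⟨c, hcC, hcm⟩ := C.exists_mem_eq_inf' hC (fun c => d x c)
      exact Finset.card_pos.mpr ⟨c, Finset.mem_filter.mpr ⟨hcC, hcm.symm⟩⟩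
    have hkR : (0:ℝ) < (k:ℝ) := Nat.cast_pos.mpr hk0
    have hym : m ≤ d x y := Finset.inf'_le _ hy
    by_cases hmin : d x y = m
    · -- minimal distortion case
      have hA : (∑ y' : Y, if d x y' < d x y then Q y' else 0) = 0 := by
        apply Finset.sum_eq_zero
        intro y' _
        by_cases h1 : d x y' < d x y
        · rw [if_pos h1, hQ]
          have hnc : y' ∉ C := fun hmem =>
            (lt_irrefl m) (lt_of_le_of_lt (Finset.inf'_le _ hmem) (hmin ▸ h1))
          simp [hnc]
        · rw [if_neg h1]
      have hB : (∑ y' : Y, if d x y' = d x y then Q y' else 0) = (k:ℝ) / M := by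
        have heq : ∀ y' : Y, (if d x y' = d x y then Q y' else 0)
            = if y' ∈ C.filter (fun c => d x c = m) then 1/(M:ℝ) else 0 := by
          intro y'
          by_cases h1 : d x y' = m <;> by_cases h2 : y' ∈ C <;>
            simp [h1, h2, hQ, hmin, Finset.mem_filter]
        rw [Finset.sum_congr rfl (fun y' _ => heq y')]
        rw [Finset.sum_ite_mem, Finset.univ_inter, Finset.sum_const, ← hk, nsmul_eq_mul]
        ring
      have hk1 : 1/(k:ℝ) ≤ 1 := by
        rw [div_le_one hkR]; exact_mod_cast hk0
      have key : ∀ u : ℝ, u * ((k:ℝ)/M) ≤ 1/M ↔ u ≤ 1/(k:ℝ) := by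
        intro u
        rw [← mul_div_assoc, div_le_div_iff_of_pos_right hMR, le_div_iff₀ hkR]
      have hset : {u : ℝ | u ∈ Set.Icc (0:ℝ) 1 ∧ pc Q d x y u ≤ 1/(M:ℝ)}
          = Set.Icc 0 (1/(k:ℝ)) := by
        ext u
        simp only [Set.mem_setOf_eq, Set.mem_Icc, pc, hA, hB, zero_add]
        constructor
        · rintro ⟨⟨h0, _⟩, h2⟩; exact ⟨h0, (key u).mp h2⟩
        · rintro ⟨h0, h1⟩; exact ⟨⟨h0, h1.trans hk1⟩, (key u).mpr h1⟩
      rw [hset, Real.volume_Icc, ENNReal.toReal_ofReal (by rw [sub_zero]; positivity)]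
      rw [if_pos hy, if_pos ⟨hy, hmin⟩]
      field_simp
      simp
    · -- non-minimal distortion case
      have hlt : m < d x y := lt_of_le_of_ne hym (Ne.symm hmin)
      obtain ⟨c₀, hc₀C, hc₀m⟩ := C.exists_mem_eq_inf' hC (fun c => d x c)
      have hnnA : ∀ i : Y, i ∈ Finset.univ → 0 ≤ (if d x i < d x y then Q i else 0) := by
        intro i _
        rw [hQ]
        split_ifs <;> positivity
      have hA : 1/(M:ℝ) ≤ ∑ y' : Y, if d x y' < d x y then Q y' else 0 := by
        have h1 := Finset.single_le_sum hnnA (Finset.mem_univ c₀)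
        rw [if_pos (by rw [← hc₀m]; exact hlt)] at h1
        simpa [hQ, hc₀C] using h1
      have hnnB : ∀ i : Y, i ∈ Finset.univ → 0 ≤ (if d x i = d x y then Q i else 0) := by
        intro i _
        rw [hQ]
        split_ifs <;> positivity
      have hB : 1/(M:ℝ) ≤ ∑ y' : Y, if d x y' = d x y then Q y' else 0 := by
        have h1 := Finset.single_le_sum hnnB (Finset.mem_univ y)
        rw [if_pos rfl] at h1
        simpa [hQ, hy] using h1
      have hsub : {u : ℝ | u ∈ Set.Icc (0:ℝ) 1 ∧ pc Q d x y u ≤ 1/(M:ℝ)} ⊆ {(0:ℝ)} := by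
        rintro u ⟨⟨h0, _⟩, h2⟩
        simp only [Set.mem_singleton_iff]
        by_contra hu
        have hupos : 0 < u := lt_of_le_of_ne h0 (Ne.symm hu)
        simp only [pc] at h2
        have hup : 0 < u * (1/(M:ℝ)) := mul_pos hupos (by positivity)
        have hle : u * (1/(M:ℝ)) ≤ u * (∑ y' : Y, if d x y' = d x y then Q y' else 0) :=
          mul_le_mul_of_nonneg_left hB h0
        linarith
      have hvol : volume {u : ℝ | u ∈ Set.Icc (0:ℝ) 1 ∧ pc Q d x y u ≤ 1/(M:ℝ)} = 0 :=
        measure_mono_null hsub (measure_singleton _)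
      rw [hvol]
      simp [hmin]
  · simp [hy]
end

section
/- Let C ⊆ 𝒴 be a nonempty code with |C| = M and let Q^C be the uniform probability mass function on C. Then the average distortion of the code equals E_{X ~ P_X}[ min_{y ∈ C} d(X,y) ] = D̃(1/M, Q^C). -/
open MeasureTheory

lemma integral_aff (a b w : ℝ) (hb : 0 < b) :
    (∫ u in Set.Icc (0:ℝ) 1, if a + u * b ≤ w then (1:ℝ) else 0)
      = max 0 (min 1 ((w - a) / b)) := by
  have h : (fun u : ℝ => if a + u * b ≤ w then (1:ℝ) else 0)
      = Set.indicator (Set.Iic ((w - a) / b)) (fun _ => (1:ℝ)) := by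
    funext u
    by_cases h : a + u * b ≤ w
    · rw [if_pos h, Set.indicator_of_mem]
      exact Set.mem_Iic.2 ((le_div_iff₀ hb).2 (by linarith))
    · rw [if_neg h, Set.indicator_of_notMem]
      intro hmem
      exact h (by have := (le_div_iff₀ hb).1 (Set.mem_Iic.1 hmem); linarith)
  have hset : Set.Icc (0:ℝ) 1 ∩ Set.Iic ((w - a) / b)
      = Set.Icc 0 (min 1 ((w - a) / b)) := by
    ext u
    simp only [Set.mem_inter_iff, Set.mem_Icc, Set.mem_Iic, le_min_iff]
    tauto
  rw [h, setIntegral_indicator measurableSet_Iic, setIntegral_const,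
    hset, measureReal_def, Real.volume_Icc, smul_eq_mul, mul_one, sub_zero]
  rcases le_total (min 1 ((w - a) / b)) 0 with h0 | h0
  · rw [ENNReal.ofReal_eq_zero.2 h0, max_eq_left h0, ENNReal.toReal_zero]
  · rw [ENNReal.toReal_ofReal h0, max_eq_right h0]

/-- For a nonempty code `C` of size `M` with uniform pmf `Q^C`, the average distortion equals
`D̃(1/M, Q^C)`. -/
theorem code_distortion_eq {X Y : Type*} [Fintype X] [Fintype Y] [Nonempty X] [Nonempty Y]
    [DecidableEq Y]
    (P : X → ℝ) (hP0 : ∀ x, 0 ≤ P x) (hP1 : ∑ x : X, P x = 1)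
    (d : X → Y → ℝ) (hd : ∀ x y, 0 ≤ d x y)
    (C : Finset Y) (hC : C.Nonempty) (M : ℕ) (hM : M = C.card) :
    ∑ x : X, P x * (C.inf' hC fun y => d x y)
      = Dtilde P (fun y => if y ∈ C then 1 / (M : ℝ) else 0) d (1 / (M : ℝ)) := by
  classical
  have hM0 : 0 < M := by rw [hM]; exact Finset.card_pos.2 hC
  have hMR : (0:ℝ) < M := by exact_mod_cast hM0
  simp only [Dtilde]
  set Q : Y → ℝ := fun y => if y ∈ C then 1/(M:ℝ) else 0 with hQdef
  have hcount : ∀ (p : Y → Prop) [DecidablePred p],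
      ∑ y' : Y, (if p y' then Q y' else 0) = ((C.filter p).card : ℝ) / M := by
    intro p _
    have h1 : ∀ y' : Y, (if p y' then Q y' else 0)
        = if y' ∈ C.filter p then 1/(M:ℝ) else 0 := by
      intro y'
      simp only [Finset.mem_filter, hQdef]
      by_cases h1 : p y' <;> by_cases h2 : y' ∈ C <;> simp [h1, h2]
    rw [Finset.sum_congr rfl fun y' _ => h1 y', Finset.sum_ite_mem,
      Finset.univ_inter, Finset.sum_const, nsmul_eq_mul]
    ring
  have key : ∀ x : X,
      ∑ y : Y, P x * Q y * d x y *
        (∫ u in Set.Icc (0:ℝ) 1, if pc Q d x y u ≤ 1/(M:ℝ) then (1:ℝ) else 0)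
      = P x * (C.inf' hC fun y => d x y) * (1/(M:ℝ)) := by
    intro x
    set m := C.inf' hC fun y => d x y with hm
    set S := C.filter (fun y => d x y = m) with hS
    have hSne : S.Nonempty := by
      obtain ⟨y₀, hy₀, hy₀m⟩ := C.exists_mem_eq_inf' hC (fun y => d x y)
      exact ⟨y₀, Finset.mem_filter.2 ⟨hy₀, hy₀m.symm⟩⟩
    have hE0 : (0:ℝ) < (S.card : ℝ) := by exact_mod_cast Finset.card_pos.2 hSne
    have hint : ∀ y ∈ C,
        (∫ u in Set.Icc (0:ℝ) 1, if pc Q d x y u ≤ 1/(M:ℝ) then (1:ℝ) else 0)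
        = if d x y = m then 1 / ((S.card : ℝ)) else 0 := by
      intro y hy
      set L := (C.filter (fun y' => d x y' < d x y)).card with hL
      set E := (C.filter (fun y' => d x y' = d x y)).card with hEd
      have hpc : ∀ u, pc Q d x y u = (L:ℝ)/M + u * ((E:ℝ)/M) := by
        intro u
        rw [pc, hcount, hcount]
      have hE1 : 0 < E := Finset.card_pos.2 ⟨y, Finset.mem_filter.2 ⟨hy, rfl⟩⟩
      have hEpos : (0:ℝ) < (E:ℝ)/M := div_pos (by exact_mod_cast hE1) hMR
      simp_rw [hpc]
      rw [integral_aff _ _ _ hEpos]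
      by_cases hym : d x y = m
      · have hL0 : L = 0 := by
          rw [hL, Finset.card_eq_zero, Finset.filter_eq_empty_iff]
          intro y' hy'
          rw [hym]
          exact not_lt.2 (Finset.inf'_le _ hy')
        have hES : E = S.card := by rw [hEd, hS, hym]
        rw [if_pos hym, hL0, hES]
        have h1 : ((1:ℝ)/M - ((0:ℕ):ℝ)/M) / ((S.card:ℝ)/M) = 1/(S.card:ℝ) := by
          rw [Nat.cast_zero]
          field_simp
          simp
        rw [h1]
        have hmin : min 1 (1/(S.card:ℝ)) = 1/(S.card:ℝ) := by
          apply min_eq_right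
          rw [div_le_one hE0]
          exact_mod_cast Finset.card_pos.2 hSne
        rw [hmin, max_eq_right (by positivity)]
      · have hL1 : 1 ≤ L := by
          obtain ⟨y₀, hy₀S⟩ := hSne
          rw [hS, Finset.mem_filter] at hy₀S
          apply Finset.card_pos.2
          refine ⟨y₀, Finset.mem_filter.2 ⟨hy₀S.1, ?_⟩⟩
          rw [hy₀S.2]
          exact lt_of_le_of_ne (Finset.inf'_le _ hy) fun h => hym h.symm
        rw [if_neg hym]
        have hnum : ((1:ℝ)/M - (L:ℝ)/M) ≤ 0 := by
          have h1L : (1:ℝ) ≤ (L:ℝ) := by exact_mod_cast hL1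
          rw [div_sub_div_same]
          exact div_nonpos_iff.2 (Or.inr ⟨by linarith, hMR.le⟩)
        have hq : ((1:ℝ)/M - (L:ℝ)/M) / ((E:ℝ)/M) ≤ 0 :=
          div_nonpos_iff.2 (Or.inr ⟨hnum, hEpos.le⟩)
        rw [max_eq_left ((min_le_right _ _).trans hq)]
    have hstep1 : ∑ y : Y, P x * Q y * d x y *
        (∫ u in Set.Icc (0:ℝ) 1, if pc Q d x y u ≤ 1/(M:ℝ) then (1:ℝ) else 0)
        = ∑ y ∈ C, P x * Q y * d x y *
        (∫ u in Set.Icc (0:ℝ) 1, if pc Q d x y u ≤ 1/(M:ℝ) then (1:ℝ) else 0) := by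
      refine (Finset.sum_subset (Finset.subset_univ C) ?_).symm
      intro y _ hyC
      have : Q y = 0 := by simp [hQdef, hyC]
      rw [this]; ring
    rw [hstep1]
    have hstep2 : ∑ y ∈ C, P x * Q y * d x y *
        (∫ u in Set.Icc (0:ℝ) 1, if pc Q d x y u ≤ 1/(M:ℝ) then (1:ℝ) else 0)
        = ∑ y ∈ C, (if d x y = m then P x * (1/(M:ℝ)) * m * (1/(S.card:ℝ)) else 0) := by
      refine Finset.sum_congr rfl fun y hy => ?_
      rw [hint y hy]
      have hQy : Q y = 1/(M:ℝ) := by simp [hQdef, hy]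
      rw [hQy]
      split_ifs with h
      · rw [h]
      · ring
    rw [hstep2, ← Finset.sum_filter, ← hS, Finset.sum_const, nsmul_eq_mul]
    field_simp
  rw [Finset.sum_congr rfl fun x _ => key x, ← Finset.sum_mul]
  field_simp
end

section
/- For every nonempty code C ⊆ 𝒴 with |C| = M, the average distortion satisfies E_{X ~ P_X}[ min_{y ∈ C} d(X,y) ] ≥ inf_Q D̃(1/M, Q), where the infimum is over all probability mass functions Q on 𝒴. -/
open MeasureTheory

/-- Converse: for every nonempty code `C` with `|C| = M`, the average distortion is at least
`inf_Q D̃(1/M, Q)`, the infimum over pmfs `Q` on `Y`. -/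
theorem converse_bound {X Y : Type*} [Fintype X] [Fintype Y] [Nonempty X] [Nonempty Y]
    (P : X → ℝ) (hP0 : ∀ x, 0 ≤ P x) (hP1 : ∑ x : X, P x = 1)
    (d : X → Y → ℝ) (hd : ∀ x y, 0 ≤ d x y)
    (C : Finset Y) (hC : C.Nonempty) (M : ℕ) (hM : M = C.card) :
    sInf {v : ℝ | ∃ Q : Y → ℝ, (∀ y, 0 ≤ Q y) ∧ (∑ y : Y, Q y = 1) ∧
        v = Dtilde P Q d (1 / (M : ℝ))}
      ≤ ∑ x : X, P x * (C.inf' hC fun y => d x y) := by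
  classical
  have hM1 : 1 ≤ M := by rw [hM]; exact hC.card_pos
  have hMpos : (0:ℝ) < (M:ℝ) := by exact_mod_cast Nat.lt_of_lt_of_le Nat.zero_lt_one hM1
  have hMne : (M:ℝ) ≠ 0 := ne_of_gt hMpos
  set Q : Y → ℝ := fun y => if y ∈ C then (M:ℝ)⁻¹ else 0 with hQdef
  have hQ0 : ∀ y, 0 ≤ Q y := by
    intro y; simp only [hQdef]; split_ifs <;> positivity
  have hQ1 : ∑ y : Y, Q y = 1 := by
    simp only [hQdef]
    rw [Finset.sum_ite_mem, Finset.univ_inter, Finset.sum_const, ← hM, nsmul_eq_mul]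
    field_simp
  -- the per-x computation
  have key : ∀ x : X, ∑ y : Y, P x * Q y * d x y *
      (∫ u in Set.Icc (0:ℝ) 1, if pc Q d x y u ≤ 1 / (M:ℝ) then (1:ℝ) else 0)
      = P x * (M:ℝ)⁻¹ * (C.inf' hC fun y => d x y) := by
    intro x
    set m : ℝ := C.inf' hC fun y => d x y with hmdef
    obtain ⟨ys, hysC, hys⟩ := C.exists_mem_eq_inf' hC (fun y => d x y)
    have hmle : ∀ y ∈ C, m ≤ d x y := fun y hy => Finset.inf'_le _ hy
    set k : ℕ := (C.filter fun y' => d x y' = m).card with hkdef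
    have hk1 : 1 ≤ k := by
      rw [hkdef]
      exact Finset.card_pos.2 ⟨ys, Finset.mem_filter.2 ⟨hysC, hys.symm⟩⟩
    have hkpos : (0:ℝ) < (k:ℝ) := by exact_mod_cast hk1
    have hkne : (k:ℝ) ≠ 0 := ne_of_gt hkpos
    -- Case A: y ∈ C with d x y > m gives zero integral
    have hA : ∀ y ∈ C, m < d x y →
        (∫ u in Set.Icc (0:ℝ) 1, if pc Q d x y u ≤ 1 / (M:ℝ) then (1:ℝ) else 0) = 0 := by
      intro y hyC hlt
      have hz : ∀ u : ℝ, u ∈ Set.Icc (0:ℝ) 1 → u ≠ 0 →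
          (if pc Q d x y u ≤ 1 / (M:ℝ) then (1:ℝ) else 0) = 0 := by
        intro u hu hu0
        have hupos : 0 < u := lt_of_le_of_ne hu.1 (Ne.symm hu0)
        have ha : (M:ℝ)⁻¹ ≤ ∑ y' : Y, if d x y' < d x y then Q y' else 0 := by
          have h1 := Finset.single_le_sum
            (f := fun y' => if d x y' < d x y then Q y' else 0)
            (fun y' _ => by split_ifs; exacts [hQ0 y', le_rfl])
            (Finset.mem_univ ys)
          simpa [show d x ys < d x y from hys ▸ hlt, hQdef, hysC] using h1
        have hb : (M:ℝ)⁻¹ ≤ ∑ y' : Y, if d x y' = d x y then Q y' else 0 := by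
          have h1 := Finset.single_le_sum
            (f := fun y' => if d x y' = d x y then Q y' else 0)
            (fun y' _ => by split_ifs; exacts [hQ0 y', le_rfl])
            (Finset.mem_univ y)
          simpa [hQdef, hyC] using h1
        have hkey : 1 / (M:ℝ) < pc Q d x y u := by
          rw [one_div]
          unfold pc
          have h2 : u * (M:ℝ)⁻¹ ≤ u * ∑ y' : Y, if d x y' = d x y then Q y' else 0 :=
            mul_le_mul_of_nonneg_left hb (le_of_lt hupos)
          have h3 : 0 < u * (M:ℝ)⁻¹ := mul_pos hupos (inv_pos.2 hMpos)
          linarith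
        rw [if_neg (not_le.2 hkey)]
      have hne : ∀ᵐ u : ℝ, u ≠ 0 := by
        rw [MeasureTheory.ae_iff]
        simpa using Real.volume_singleton
      rw [MeasureTheory.setIntegral_congr_ae measurableSet_Icc
        (hne.mono fun u hu hmem => hz u hmem hu)]
      simp
    -- Case B: y ∈ C with d x y = m gives integral k⁻¹
    have hB : ∀ y ∈ C, d x y = m →
        (∫ u in Set.Icc (0:ℝ) 1, if pc Q d x y u ≤ 1 / (M:ℝ) then (1:ℝ) else 0)
          = (k:ℝ)⁻¹ := by
      intro y hyC hdm
      have ha : (∑ y' : Y, if d x y' < d x y then Q y' else 0) = 0 := by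
        apply Finset.sum_eq_zero
        intro y' _
        split_ifs with h
        · by_cases hy'C : y' ∈ C
          · exact absurd (hdm ▸ h) (not_lt.2 (hmle y' hy'C))
          · simp [hQdef, hy'C]
        · rfl
      have hb : (∑ y' : Y, if d x y' = d x y then Q y' else 0) = (k:ℝ) * (M:ℝ)⁻¹ := by
        have hterm : ∀ y' : Y, (if d x y' = d x y then Q y' else 0)
            = if y' ∈ C.filter (fun z => d x z = m) then (M:ℝ)⁻¹ else 0 := by
          intro y'
          simp only [hQdef, Finset.mem_filter, hdm]
          split_ifs <;> first | rfl | tauto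
        rw [Finset.sum_congr rfl fun y' _ => hterm y', Finset.sum_ite_mem,
          Finset.univ_inter, Finset.sum_const, ← hkdef, nsmul_eq_mul]
      have hcond : ∀ u : ℝ, (pc Q d x y u ≤ 1 / (M:ℝ)) ↔ u ≤ (k:ℝ)⁻¹ := by
        intro u
        unfold pc
        rw [ha, hb, zero_add]
        rw [show u * ((k:ℝ) * (M:ℝ)⁻¹) = u * (k:ℝ) / (M:ℝ) by field_simp]
        rw [div_le_div_iff_of_pos_right hMpos, inv_eq_one_div, le_div_iff₀ hkpos]
      have heq : (fun u : ℝ => if pc Q d x y u ≤ 1 / (M:ℝ) then (1:ℝ) else 0)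
          = Set.indicator (Set.Iic ((k:ℝ)⁻¹)) (fun _ => (1:ℝ)) := by
        funext u
        simp only [Set.indicator, Set.mem_Iic, hcond u]
      have hkle1 : ((k:ℝ))⁻¹ ≤ 1 := inv_le_one_of_one_le₀ (by exact_mod_cast hk1)
      have hset : Set.Icc (0:ℝ) 1 ∩ Set.Iic ((k:ℝ)⁻¹) = Set.Icc (0:ℝ) ((k:ℝ)⁻¹) := by
        ext u
        simp only [Set.mem_inter_iff, Set.mem_Icc, Set.mem_Iic]
        constructor
        · rintro ⟨⟨h0, _⟩, h2⟩; exact ⟨h0, h2⟩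
        · rintro ⟨h0, h2⟩; exact ⟨⟨h0, h2.trans hkle1⟩, h2⟩
      rw [heq, MeasureTheory.setIntegral_indicator measurableSet_Iic,
        hset, MeasureTheory.setIntegral_const, smul_eq_mul, mul_one, Measure.real, Real.volume_Icc, sub_zero,
        ENNReal.toReal_ofReal (by positivity)]
    -- assemble the per-x sum
    rw [← Finset.sum_subset (Finset.subset_univ C)
      (fun y _ hy => by simp [hQdef, hy])]
    rw [← Finset.sum_filter_add_sum_filter_not C (fun y => d x y = m)]
    have h2 : ∀ y ∈ C.filter (fun y => ¬ d x y = m), P x * Q y * d x y *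
        (∫ u in Set.Icc (0:ℝ) 1, if pc Q d x y u ≤ 1 / (M:ℝ) then (1:ℝ) else 0) = 0 := by
      intro y hy
      obtain ⟨hyC, hne⟩ := Finset.mem_filter.1 hy
      rw [hA y hyC (lt_of_le_of_ne (hmle y hyC) (Ne.symm hne)), mul_zero]
    rw [Finset.sum_eq_zero h2, add_zero]
    have h3 : ∀ y ∈ C.filter (fun y => d x y = m), P x * Q y * d x y *
        (∫ u in Set.Icc (0:ℝ) 1, if pc Q d x y u ≤ 1 / (M:ℝ) then (1:ℝ) else 0)
        = P x * (M:ℝ)⁻¹ * m * (k:ℝ)⁻¹ := by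
      intro y hy
      obtain ⟨hyC, hdm⟩ := Finset.mem_filter.1 hy
      rw [hB y hyC hdm, hdm]
      simp only [hQdef, if_pos hyC]
    rw [Finset.sum_congr rfl h3, Finset.sum_const, ← hkdef, nsmul_eq_mul]
    field_simp
  -- assemble
  have hDt : Dtilde P Q d (1 / (M:ℝ)) = ∑ x : X, P x * (C.inf' hC fun y => d x y) := by
    unfold Dtilde
    rw [Finset.sum_congr rfl fun x _ => key x, one_div, inv_inv, Finset.mul_sum]
    refine Finset.sum_congr rfl fun x _ => ?_
    field_simp
  have hmem : Dtilde P Q d (1 / (M:ℝ)) ∈ {v : ℝ | ∃ Q : Y → ℝ, (∀ y, 0 ≤ Q y) ∧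
      (∑ y : Y, Q y = 1) ∧ v = Dtilde P Q d (1 / (M : ℝ))} := ⟨Q, hQ0, hQ1, rfl⟩
  have hbdd : BddBelow {v : ℝ | ∃ Q : Y → ℝ, (∀ y, 0 ≤ Q y) ∧ (∑ y : Y, Q y = 1) ∧
      v = Dtilde P Q d (1 / (M : ℝ))} := by
    refine ⟨0, fun v hv => ?_⟩
    obtain ⟨Q', hQ'0, _, rfl⟩ := hv
    unfold Dtilde
    apply mul_nonneg
    · rw [one_div, inv_inv]; exact le_of_lt hMpos
    · apply Finset.sum_nonneg; intro x _
      apply Finset.sum_nonneg; intro y _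
      apply mul_nonneg
      · have := hQ'0 y; have := hd x y; have := hP0 x; positivity
      · apply MeasureTheory.setIntegral_nonneg measurableSet_Icc
        intro u _; split_ifs <;> norm_num
  calc sInf _ ≤ Dtilde P Q d (1 / (M:ℝ)) := csInf_le hbdd hmem
    _ = _ := hDt
end

section
/- For every fixed w ∈ (0,1], the functional Q ↦ D̃(w,Q) is convex on the set of probability mass functions on 𝒴: for all probability mass functions Q₁, Q₂ on 𝒴 and all θ ∈ [0,1], D̃(w, θQ₁ + (1−θ)Q₂) ≤ θ D̃(w,Q₁) + (1−θ) D̃(w,Q₂). -/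
open MeasureTheory

noncomputable def Ifun {X Y : Type*} [Fintype Y] (Q : Y → ℝ) (d : X → Y → ℝ)
    (x : X) (w : ℝ) (y : Y) : ℝ :=
  ∫ u in Set.Icc (0:ℝ) 1, if pc Q d x y u ≤ w then (1:ℝ) else 0

lemma integral_ind_affine (A B w : ℝ) (hB : 0 < B) :
    (∫ u in Set.Icc (0:ℝ) 1, if A + u * B ≤ w then (1:ℝ) else 0)
      = max 0 (min 1 ((w - A) / B)) := by
  set t := (w - A) / B with ht
  have hiff : ∀ u : ℝ, (A + u * B ≤ w) ↔ u ≤ t := by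
    intro u
    rw [ht, le_div_iff₀ hB]
    constructor <;> intro h <;> linarith
  have h1 : (∫ u in Set.Icc (0:ℝ) 1, if A + u * B ≤ w then (1:ℝ) else 0)
      = ∫ u in Set.Icc (0:ℝ) 1, (Set.Iic t).indicator (fun _ => (1:ℝ)) u := by
    apply congrArg
    funext u
    simp [Set.indicator_apply, Set.mem_Iic, hiff u]
  rw [h1, MeasureTheory.setIntegral_indicator measurableSet_Iic]
  have h2 : Set.Icc (0:ℝ) 1 ∩ Set.Iic t = Set.Icc 0 (min 1 t) := by
    ext u
    simp only [Set.mem_inter_iff, Set.mem_Icc, Set.mem_Iic, le_min_iff]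
    tauto
  rw [h2, MeasureTheory.setIntegral_const, measureReal_def, Real.volume_Icc, smul_eq_mul, mul_one,
    ENNReal.toReal_ofReal', sub_zero, max_comm]

lemma Ifun_eq {X Y : Type*} [Fintype Y] (Q : Y → ℝ) (d : X → Y → ℝ) (x : X) (w : ℝ) (y : Y)
    (hB : 0 < ∑ y' : Y, if d x y' = d x y then Q y' else 0) :
    Ifun Q d x w y = max 0 (min 1 ((w - ∑ y' : Y, if d x y' < d x y then Q y' else 0)
      / (∑ y' : Y, if d x y' = d x y then Q y' else 0))) := by
  unfold Ifun pc
  exact integral_ind_affine _ _ _ hB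

lemma B_pos {X Y : Type*} [Fintype Y] (Q : Y → ℝ) (hQ0 : ∀ y, 0 ≤ Q y)
    (d : X → Y → ℝ) (x : X) (y : Y) (hy : Q y ≠ 0) :
    0 < ∑ y' : Y, if d x y' = d x y then Q y' else 0 := by
  have hle : Q y ≤ ∑ y' : Y, if d x y' = d x y then Q y' else 0 := by
    have := Finset.single_le_sum (f := fun y' => if d x y' = d x y then Q y' else 0)
      (fun i _ => by by_cases h : d x i = d x y <;> simp [h, hQ0 i]) (Finset.mem_univ y)
    simpa using this
  have : 0 < Q y := lt_of_le_of_ne (hQ0 y) (Ne.symm hy)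
  linarith

lemma Ifun_nonneg {X Y : Type*} [Fintype Y] (Q : Y → ℝ) (hQ0 : ∀ y, 0 ≤ Q y)
    (d : X → Y → ℝ) (x : X) (w : ℝ) (y : Y) (hy : Q y ≠ 0) :
    0 ≤ Ifun Q d x w y := by
  rw [Ifun_eq Q d x w y (B_pos Q hQ0 d x y hy)]
  exact le_max_left _ _

lemma Ifun_le_one {X Y : Type*} [Fintype Y] (Q : Y → ℝ) (hQ0 : ∀ y, 0 ≤ Q y)
    (d : X → Y → ℝ) (x : X) (w : ℝ) (y : Y) (hy : Q y ≠ 0) :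
    Ifun Q d x w y ≤ 1 := by
  rw [Ifun_eq Q d x w y (B_pos Q hQ0 d x y hy)]
  exact max_le zero_le_one (min_le_left _ _)

lemma telescope_min (g : ℝ → ℝ) (m : ℝ → ℝ) (V : Finset ℝ) :
    ∑ v ∈ V, (g (∑ v' ∈ V.filter (· ≤ v), m v') - g (∑ v' ∈ V.filter (· < v), m v'))
      = g (∑ v ∈ V, m v) - g 0 := by
  induction V using Finset.induction_on_max with
  | empty => simp
  | insert a s ha ih =>
      have hains : a ∉ s := fun h => lt_irrefl a (ha a h)
      rw [Finset.sum_insert hains]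
      have h1 : (insert a s).filter (· ≤ a) = insert a s := by
        rw [Finset.filter_insert]
        simp only [le_refl, if_true]
        congr 1
        rw [Finset.filter_eq_self]
        exact fun x hx => (ha x hx).le
      have h2 : (insert a s).filter (· < a) = s := by
        rw [Finset.filter_insert, if_neg (lt_irrefl a), Finset.filter_eq_self]
        exact fun x hx => ha x hx
      rw [h1, h2]
      have h5 : ∑ v ∈ s, (g (∑ v' ∈ (insert a s).filter (· ≤ v), m v')
          - g (∑ v' ∈ (insert a s).filter (· < v), m v'))
          = ∑ v ∈ s, (g (∑ v' ∈ s.filter (· ≤ v), m v') - g (∑ v' ∈ s.filter (· < v), m v')) := by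
        apply Finset.sum_congr rfl
        intro v hv
        rw [Finset.filter_insert, if_neg (not_le.mpr (ha v hv)),
          Finset.filter_insert, if_neg (asymm (ha v hv))]
      rw [h5, ih, Finset.sum_insert hains]
      ring

lemma clamp_eq (A B w : ℝ) (hB : 0 < B) :
    B * max 0 (min 1 ((w - A) / B)) = min (A + B) w - min A w := by
  rcases le_total w A with h | h
  · have ht : (w - A) / B ≤ 0 := div_nonpos_of_nonpos_of_nonneg (by linarith) hB.le
    rw [max_eq_left (le_trans (min_le_right _ _) ht), min_eq_right h,
      min_eq_right (by linarith : w ≤ A + B)]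
    ring
  · rcases le_total (A + B) w with h2 | h2
    · have ht : 1 ≤ (w - A) / B := by rw [le_div_iff₀ hB]; linarith
      rw [min_eq_left ht, max_eq_right zero_le_one, min_eq_left h2, min_eq_left h]
      ring
    · have ht1 : (w - A) / B ≤ 1 := by rw [div_le_one hB]; linarith
      have ht0 : 0 ≤ (w - A) / B := div_nonneg (by linarith) hB.le
      rw [min_eq_right ht1, max_eq_right ht0, min_eq_right h2, min_eq_left h]
      field_simp

lemma sum_split {Y : Type*} [Fintype Y] (Q : Y → ℝ) (z : Y → ℝ) (v : ℝ) :
    (∑ y : Y, if z y ≤ v then Q y else 0)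
      = (∑ y : Y, if z y < v then Q y else 0) + (∑ y : Y, if z y = v then Q y else 0) := by
  rw [← Finset.sum_add_distrib]
  apply Finset.sum_congr rfl
  intro y _
  rcases lt_trichotomy (z y) v with h | h | h
  · simp [h.le, h, h.ne]
  · simp [h]
  · simp [not_le.mpr h, not_lt.mpr h.le, h.ne']

lemma sum_QI {X Y : Type*} [Fintype Y] (Q : Y → ℝ) (hQ0 : ∀ y, 0 ≤ Q y)
    (hQ1 : ∑ y : Y, Q y = 1) (d : X → Y → ℝ) (x : X) (w : ℝ) (hw : w ∈ Set.Ioc (0:ℝ) 1) :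
    ∑ y : Y, Q y * Ifun Q d x w y = w := by
  classical
  set V : Finset ℝ := Finset.image (d x) Finset.univ with hV
  set m : ℝ → ℝ := fun v => ∑ y : Y, if d x y = v then Q y else 0 with hm
  have hmemV : ∀ y : Y, d x y ∈ V := fun y => Finset.mem_image_of_mem _ (Finset.mem_univ y)
  have hcum : ∀ v : ℝ, (∑ v' ∈ V.filter (· ≤ v), m v') = ∑ y : Y, if d x y ≤ v then Q y else 0 := by
    intro v
    rw [Finset.sum_comm' (s := V.filter (· ≤ v)) (t := fun _ => Finset.univ)
      (t' := Finset.univ) (s' := fun _ => V.filter (· ≤ v)) (by simp [and_comm])]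
    apply Finset.sum_congr rfl
    intro y _
    rw [Finset.sum_ite_eq]
    simp [Finset.mem_filter, hmemV y]
  have hcums : ∀ v : ℝ, (∑ v' ∈ V.filter (· < v), m v') = ∑ y : Y, if d x y < v then Q y else 0 := by
    intro v
    rw [Finset.sum_comm' (s := V.filter (· < v)) (t := fun _ => Finset.univ)
      (t' := Finset.univ) (s' := fun _ => V.filter (· < v)) (by simp [and_comm])]
    apply Finset.sum_congr rfl
    intro y _
    rw [Finset.sum_ite_eq]
    simp [Finset.mem_filter, hmemV y]
  have htot : ∑ v ∈ V, m v = 1 := by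
    rw [Finset.sum_comm' (s := V) (t := fun _ => Finset.univ)
      (t' := Finset.univ) (s' := fun _ => V) (by simp [and_comm])]
    rw [← hQ1]
    apply Finset.sum_congr rfl
    intro y _
    rw [Finset.sum_ite_eq, if_pos (hmemV y)]
  have hfib := Finset.sum_fiberwise_of_maps_to (g := d x) (s := Finset.univ) (t := V)
    (fun y _ => hmemV y) (fun y => Q y * Ifun Q d x w y)
  rw [← hfib]
  have hfibval : ∀ v ∈ V, (∑ y ∈ Finset.univ.filter (fun y => d x y = v), Q y * Ifun Q d x w y)
      = min (∑ v' ∈ V.filter (· ≤ v), m v') w - min (∑ v' ∈ V.filter (· < v), m v') w := by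
    intro v hv
    rw [hcum v, hcums v]
    have hmveq : (∑ y ∈ Finset.univ.filter (fun y => d x y = v), Q y)
        = ∑ y : Y, if d x y = v then Q y else 0 := Finset.sum_filter _ _
    rcases eq_or_lt_of_le (Finset.sum_nonneg (fun i (_ : i ∈ Finset.univ.filter (fun y => d x y = v)) => hQ0 i))
      with h0 | h0
    · have hmz : (∑ y : Y, if d x y = v then Q y else 0) = 0 := by
        rw [← hmveq]; exact h0.symm
      have hz : ∀ y ∈ Finset.univ.filter (fun y => d x y = v), Q y = 0 :=
        (Finset.sum_eq_zero_iff_of_nonneg (fun i _ => hQ0 i)).mp h0.symm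
      have hL : (∑ y ∈ Finset.univ.filter (fun y => d x y = v), Q y * Ifun Q d x w y) = 0 :=
        Finset.sum_eq_zero (fun y hy => by rw [hz y hy, zero_mul])
      rw [hL, sum_split Q (d x) v, hmz, add_zero, sub_self]
    · have hmvpos : 0 < ∑ y : Y, if d x y = v then Q y else 0 := by rw [← hmveq]; exact h0
      have hIval : ∀ y ∈ Finset.univ.filter (fun y => d x y = v),
          Q y * Ifun Q d x w y = Q y * max 0 (min 1 ((w - ∑ y' : Y, if d x y' < v then Q y' else 0)
            / (∑ y' : Y, if d x y' = v then Q y' else 0))) := by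
        intro y hy
        have hdy : d x y = v := by simpa using (Finset.mem_filter.mp hy).2
        rw [Ifun_eq Q d x w y (by rw [hdy]; exact hmvpos), hdy]
      rw [Finset.sum_congr rfl hIval, ← Finset.sum_mul, hmveq,
        clamp_eq _ _ _ hmvpos, sum_split Q (d x) v]
  rw [Finset.sum_congr rfl hfibval, telescope_min (fun a => min a w) m V, htot]
  show min 1 w - min 0 w = w
  rw [min_eq_right hw.2, min_eq_left hw.1.le, sub_zero]

lemma quantile_exists {X Y : Type*} [Fintype Y] [Nonempty Y] (Q : Y → ℝ) (hQ0 : ∀ y, 0 ≤ Q y)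
    (hQ1 : ∑ y : Y, Q y = 1) (d : X → Y → ℝ) (x : X) (w : ℝ) (hw : w ∈ Set.Ioc (0:ℝ) 1) :
    ∃ c : ℝ, ∀ y, Q y ≠ 0 → Ifun Q d x w y * (c - d x y) = max 0 (c - d x y) := by
  classical
  set V : Finset ℝ := Finset.image (d x) Finset.univ with hV
  have hmemV : ∀ y : Y, d x y ∈ V := fun y => Finset.mem_image_of_mem _ (Finset.mem_univ y)
  have hVne : V.Nonempty := ⟨d x (Classical.arbitrary Y), hmemV _⟩
  set V' : Finset ℝ := V.filter (fun v => w ≤ ∑ y : Y, if d x y ≤ v then Q y else 0) with hV'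
  have hmaxmem : V.max' hVne ∈ V' := by
    refine Finset.mem_filter.mpr ⟨V.max'_mem hVne, ?_⟩
    have h1 : (∑ y : Y, if d x y ≤ V.max' hVne then Q y else 0) = 1 := by
      rw [← hQ1]
      exact Finset.sum_congr rfl (fun y _ => if_pos (V.le_max' _ (hmemV y)))
    rw [h1]; exact hw.2
  have hV'ne : V'.Nonempty := ⟨_, hmaxmem⟩
  refine ⟨V'.min' hV'ne, ?_⟩
  intro y hy
  have hBpos := B_pos Q hQ0 d x y hy
  have hcw : w ≤ ∑ y' : Y, if d x y' ≤ V'.min' hV'ne then Q y' else 0 :=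
    (Finset.mem_filter.mp (V'.min'_mem hV'ne)).2
  have hABC := sum_split Q (d x) (d x y)
  rcases lt_trichotomy (d x y) (V'.min' hV'ne) with h | h | h
  · have hCy : (∑ y' : Y, if d x y' ≤ d x y then Q y' else 0) < w := by
      by_contra hge
      push_neg at hge
      exact absurd (V'.min'_le _ (Finset.mem_filter.mpr ⟨hmemV y, hge⟩)) (not_le.mpr h)
    have h1 : 1 ≤ (w - ∑ y' : Y, if d x y' < d x y then Q y' else 0)
        / (∑ y' : Y, if d x y' = d x y then Q y' else 0) := by
      rw [le_div_iff₀ hBpos]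
      linarith
    rw [Ifun_eq Q d x w y hBpos, min_eq_left h1, max_eq_right zero_le_one, one_mul,
      max_eq_right (by linarith : (0:ℝ) ≤ V'.min' hV'ne - d x y)]
  · rw [h, sub_self, mul_zero, max_self]
  · have hsub : (∑ y' : Y, if d x y' ≤ V'.min' hV'ne then Q y' else 0)
        ≤ ∑ y' : Y, if d x y' < d x y then Q y' else 0 := by
      apply Finset.sum_le_sum
      intro i _
      by_cases hi : d x i ≤ V'.min' hV'ne
      · rw [if_pos hi, if_pos (lt_of_le_of_lt hi h)]
      · rw [if_neg hi]
        by_cases hi2 : d x i < d x y <;> simp [hi2, hQ0 i]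
    have ht : (w - ∑ y' : Y, if d x y' < d x y then Q y' else 0)
        / (∑ y' : Y, if d x y' = d x y then Q y' else 0) ≤ 0 :=
      div_nonpos_of_nonpos_of_nonneg (by linarith) hBpos.le
    rw [Ifun_eq Q d x w y hBpos, max_eq_left (le_trans (min_le_right _ _) ht), zero_mul,
      max_eq_left (by linarith : V'.min' hV'ne - d x y ≤ 0)]

lemma lower_bound {X Y : Type*} [Fintype Y] (Q : Y → ℝ) (hQ0 : ∀ y, 0 ≤ Q y)
    (hQ1 : ∑ y : Y, Q y = 1) (d : X → Y → ℝ) (x : X) (w : ℝ) (hw : w ∈ Set.Ioc (0:ℝ) 1)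
    (c : ℝ) :
    c * w - ∑ y : Y, Q y * max 0 (c - d x y) ≤ ∑ y : Y, Q y * d x y * Ifun Q d x w y := by
  have hs := sum_QI Q hQ0 hQ1 d x w hw
  nth_rewrite 1 [← hs]
  rw [Finset.mul_sum, ← Finset.sum_sub_distrib]
  apply Finset.sum_le_sum
  intro y _
  by_cases hy : Q y = 0
  · simp [hy]
  · have hI0 := Ifun_nonneg Q hQ0 d x w y hy
    have hI1 := Ifun_le_one Q hQ0 d x w y hy
    have h1 : Ifun Q d x w y * (c - d x y) ≤ max 0 (c - d x y) := by
      rcases le_total (c - d x y) 0 with h | h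
      · exact le_trans (mul_nonpos_of_nonneg_of_nonpos hI0 h) (le_max_left _ _)
      · calc Ifun Q d x w y * (c - d x y) ≤ 1 * (c - d x y) :=
              mul_le_mul_of_nonneg_right hI1 h
          _ ≤ max 0 (c - d x y) := by rw [one_mul]; exact le_max_right _ _
    nlinarith [mul_le_mul_of_nonneg_left h1 (hQ0 y)]

lemma key_ineq {X Y : Type*} [Fintype Y] [Nonempty Y] (d : X → Y → ℝ) (x : X) (w : ℝ)
    (hw : w ∈ Set.Ioc (0:ℝ) 1)
    (Q₁ Q₂ : Y → ℝ) (hQ₁0 : ∀ y, 0 ≤ Q₁ y) (hQ₁1 : ∑ y : Y, Q₁ y = 1)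
    (hQ₂0 : ∀ y, 0 ≤ Q₂ y) (hQ₂1 : ∑ y : Y, Q₂ y = 1)
    (θ : ℝ) (hθ : θ ∈ Set.Icc (0:ℝ) 1) :
    ∑ y : Y, (θ * Q₁ y + (1 - θ) * Q₂ y) * d x y
        * Ifun (fun y => θ * Q₁ y + (1 - θ) * Q₂ y) d x w y
      ≤ θ * ∑ y : Y, Q₁ y * d x y * Ifun Q₁ d x w y
        + (1 - θ) * ∑ y : Y, Q₂ y * d x y * Ifun Q₂ d x w y := by
  set Qθ : Y → ℝ := fun y => θ * Q₁ y + (1 - θ) * Q₂ y with hQθ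
  have hθ1 : (0:ℝ) ≤ 1 - θ := by linarith [hθ.2]
  have hQθ0 : ∀ y, 0 ≤ Qθ y := fun y =>
    add_nonneg (mul_nonneg hθ.1 (hQ₁0 y)) (mul_nonneg hθ1 (hQ₂0 y))
  have hQθ1 : ∑ y : Y, Qθ y = 1 := by
    rw [hQθ, Finset.sum_add_distrib, ← Finset.mul_sum, ← Finset.mul_sum, hQ₁1, hQ₂1]
    ring
  obtain ⟨c, hc⟩ := quantile_exists Qθ hQθ0 hQθ1 d x w hw
  have hsθ := sum_QI Qθ hQθ0 hQθ1 d x w hw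
  have hmain : ∑ y : Y, Qθ y * d x y * Ifun Qθ d x w y
      = c * w - ∑ y : Y, Qθ y * max 0 (c - d x y) := by
    nth_rewrite 2 [← hsθ]
    rw [Finset.mul_sum, ← Finset.sum_sub_distrib]
    apply Finset.sum_congr rfl
    intro y _
    by_cases hy : Qθ y = 0
    · simp [hy]
    · rw [← hc y hy]
      ring
  have hsplit : ∑ y : Y, Qθ y * max 0 (c - d x y)
      = θ * ∑ y : Y, Q₁ y * max 0 (c - d x y)
        + (1 - θ) * ∑ y : Y, Q₂ y * max 0 (c - d x y) := by
    rw [Finset.mul_sum, Finset.mul_sum, ← Finset.sum_add_distrib]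
    apply Finset.sum_congr rfl
    intro y _
    rw [hQθ]
    ring
  have h1 := lower_bound Q₁ hQ₁0 hQ₁1 d x w hw c
  have h2 := lower_bound Q₂ hQ₂0 hQ₂1 d x w hw c
  rw [hmain, hsplit]
  nlinarith [mul_le_mul_of_nonneg_left h1 hθ.1, mul_le_mul_of_nonneg_left h2 hθ1]


/-- For fixed `w ∈ (0,1]`, the functional `Q ↦ D̃(w,Q)` is convex on pmfs on `Y`. -/
theorem Dtilde_convex {X Y : Type*} [Fintype X] [Fintype Y] [Nonempty X] [Nonempty Y]
    (P : X → ℝ) (hP0 : ∀ x, 0 ≤ P x) (hP1 : ∑ x : X, P x = 1)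
    (d : X → Y → ℝ) (hd : ∀ x y, 0 ≤ d x y)
    (w : ℝ) (hw : w ∈ Set.Ioc (0:ℝ) 1)
    (Q₁ Q₂ : Y → ℝ) (hQ₁0 : ∀ y, 0 ≤ Q₁ y) (hQ₁1 : ∑ y : Y, Q₁ y = 1)
    (hQ₂0 : ∀ y, 0 ≤ Q₂ y) (hQ₂1 : ∑ y : Y, Q₂ y = 1)
    (θ : ℝ) (hθ : θ ∈ Set.Icc (0:ℝ) 1) :
    Dtilde P (fun y => θ * Q₁ y + (1 - θ) * Q₂ y) d w
      ≤ θ * Dtilde P Q₁ d w + (1 - θ) * Dtilde P Q₂ d w := by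
  have hDrw : ∀ Q : Y → ℝ, Dtilde P Q d w
      = w⁻¹ * ∑ x : X, ∑ y : Y, P x * Q y * d x y * Ifun Q d x w y := fun Q => rfl
  rw [hDrw, hDrw, hDrw]
  have hpull : ∀ (Q : Y → ℝ) (x : X), (∑ y : Y, P x * Q y * d x y * Ifun Q d x w y)
      = P x * ∑ y : Y, Q y * d x y * Ifun Q d x w y := by
    intro Q x
    rw [Finset.mul_sum]
    exact Finset.sum_congr rfl fun y _ => by ring
  calc w⁻¹ * ∑ x : X, ∑ y : Y, P x * (θ * Q₁ y + (1 - θ) * Q₂ y) * d x y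
        * Ifun (fun y => θ * Q₁ y + (1 - θ) * Q₂ y) d x w y
      ≤ w⁻¹ * ∑ x : X, P x * (θ * ∑ y : Y, Q₁ y * d x y * Ifun Q₁ d x w y
          + (1 - θ) * ∑ y : Y, Q₂ y * d x y * Ifun Q₂ d x w y) := by
        apply mul_le_mul_of_nonneg_left _ (inv_nonneg.mpr hw.1.le)
        apply Finset.sum_le_sum
        intro x _
        rw [hpull (fun y => θ * Q₁ y + (1 - θ) * Q₂ y) x]
        exact mul_le_mul_of_nonneg_left
          (key_ineq d x w hw Q₁ Q₂ hQ₁0 hQ₁1 hQ₂0 hQ₂1 θ hθ) (hP0 x)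
    _ = θ * (w⁻¹ * ∑ x : X, ∑ y : Y, P x * Q₁ y * d x y * Ifun Q₁ d x w y)
        + (1 - θ) * (w⁻¹ * ∑ x : X, ∑ y : Y, P x * Q₂ y * d x y * Ifun Q₂ d x w y) := by
        rw [Finset.sum_congr rfl (fun x _ => (hpull Q₁ x)),
          Finset.sum_congr rfl (fun x _ => (hpull Q₂ x))]
        rw [show (∑ x : X, P x * (θ * ∑ y : Y, Q₁ y * d x y * Ifun Q₁ d x w y
          + (1 - θ) * ∑ y : Y, Q₂ y * d x y * Ifun Q₂ d x w y))
          = θ * ∑ x : X, P x * ∑ y : Y, Q₁ y * d x y * Ifun Q₁ d x w y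
            + (1 - θ) * ∑ x : X, P x * ∑ y : Y, Q₂ y * d x y * Ifun Q₂ d x w y from by
          rw [Finset.mul_sum, Finset.mul_sum, ← Finset.sum_add_distrib]
          exact Finset.sum_congr rfl fun x _ => by ring]
        ring
end

section
/- Let x ∈ (0,1) and let λ ∈ ℝ satisfy x = e^{−e^λ}(e^λ + 1). Then λ − log(−log x) ≤ log(2/3) + log( 1 + √( 1 − 9/(2 log x) ) ). -/
open Real

lemma pade_log (u : ℝ) (hu : 0 ≤ u) : Real.log (1 + u) ≤ (u^2 + 6*u) / (4*u + 6) := by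
  set f : ℝ → ℝ := fun v => (v^2 + 6*v)/(4*v + 6) - Real.log (1 + v) with hf
  have hderiv : ∀ v ∈ Set.Ioi (0:ℝ), HasDerivAt f (4*v^3/((4*v+6)^2*(1+v))) v := by
    intro v hv
    have hv0 : (0:ℝ) < v := hv
    have h1 : (4*v+6) ≠ 0 := by nlinarith
    have h2 : (1+v) ≠ 0 := by nlinarith
    have d1 : HasDerivAt (fun v : ℝ => v^2 + 6*v) (2*v + 6) v := by
      have := ((hasDerivAt_pow 2 v).fun_add ((hasDerivAt_id v).const_mul 6))
      simpa using this
    have d2 : HasDerivAt (fun v : ℝ => 4*v + 6) 4 v := by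
      have := (((hasDerivAt_id v).const_mul 4).add_const 6)
      simpa using this
    have d3 : HasDerivAt (fun v : ℝ => (v^2 + 6*v)/(4*v + 6))
        (((2*v+6)*(4*v+6) - (v^2+6*v)*4)/(4*v+6)^2) v := d1.div d2 h1
    have d4 : HasDerivAt (fun v : ℝ => Real.log (1 + v)) (1/(1+v)) v := by
      have := (((hasDerivAt_id v).const_add 1).log h2)
      simpa using this
    have := d3.fun_sub d4
    refine this.congr_deriv ?_
    field_simp
    ring
  have hmono : MonotoneOn f (Set.Ici 0) := by
    apply monotoneOn_of_deriv_nonneg (convex_Ici 0)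
    · apply ContinuousOn.sub
      · apply ContinuousOn.div (by fun_prop) (by fun_prop)
        intro v hv
        have : (0:ℝ) ≤ v := hv
        nlinarith
      · apply ContinuousOn.log (by fun_prop)
        intro v hv
        have : (0:ℝ) ≤ v := hv
        nlinarith
    · intro v hv
      rw [interior_Ici] at hv
      exact ((hderiv v hv).differentiableAt).differentiableWithinAt
    · intro v hv
      rw [interior_Ici] at hv
      rw [(hderiv v hv).deriv]
      have hv0 : (0:ℝ) < v := hv
      positivity
  have h0 : f 0 = 0 := by simp [hf]
  have := hmono (Set.self_mem_Ici) hu hu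
  rw [h0] at this
  simp only [hf] at this
  linarith

/-- Technical lemma (upper bound): if `x ∈ (0,1)` and `x = e^{−e^λ}(e^λ + 1)` then
`λ − log(−log x) ≤ log(2/3) + log(1 + √(1 − 9/(2 log x)))`. -/
theorem solution_upper (x lam : ℝ) (hx : x ∈ Set.Ioo (0:ℝ) 1)
    (h : x = Real.exp (-(Real.exp lam)) * (Real.exp lam + 1)) :
    lam - Real.log (-Real.log x)
      ≤ Real.log (2/3) + Real.log (1 + Real.sqrt (1 - 9 / (2 * Real.log x))) := by
  obtain ⟨hx0, hx1⟩ := hx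
  set u := Real.exp lam with hu
  have hu0 : 0 < u := Real.exp_pos lam
  have hlogx : Real.log x = -u + Real.log (1 + u) := by
    rw [h, Real.log_mul (by positivity) (by positivity), Real.log_exp]
    ring_nf
  have hLpos : 0 < -Real.log x := by
    have := Real.log_neg hx0 hx1
    linarith
  set L : ℝ := -Real.log x with hL
  have hLu : L = u - Real.log (1 + u) := by rw [hL, hlogx]; ring
  have hpade := pade_log u hu0.le
  have hden : (0:ℝ) < 4*u + 6 := by nlinarith
  have hkey : 3*u^2 ≤ L * (4*u + 6) := by
    have h1 : Real.log (1 + u) * (4*u+6) ≤ u^2 + 6*u := by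
      have := mul_le_mul_of_nonneg_right hpade hden.le
      rwa [div_mul_cancel₀ _ hden.ne'] at this
    nlinarith [hLu]
  -- the sqrt term
  have hsarg : 1 - 9 / (2 * Real.log x) = 1 + 9/(2*L) := by
    rw [hL]
    have hne : Real.log x ≠ 0 := (Real.log_neg hx0 hx1).ne
    field_simp
    ring
  set s := Real.sqrt (1 - 9 / (2 * Real.log x)) with hs
  have hs0 : 0 ≤ s := Real.sqrt_nonneg _
  have hLs : L * s = Real.sqrt (L^2 + 9*L/2) := by
    rw [hs, hsarg, ← Real.sqrt_sq hLpos.le, ← Real.sqrt_mul (by positivity)]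
    congr 1
    rw [Real.sqrt_sq hLpos.le]
    field_simp
  have hsq : (3*u - 2*L)^2 ≤ 4*L^2 + 18*L := by nlinarith
  have h2 : 3*u - 2*L ≤ 2 * Real.sqrt (L^2 + 9*L/2) := by
    have e1 : 3*u - 2*L ≤ Real.sqrt ((3*u - 2*L)^2) := by
      rw [Real.sqrt_sq_eq_abs]; exact le_abs_self _
    have e2 : Real.sqrt ((3*u - 2*L)^2) ≤ Real.sqrt (4*L^2 + 18*L) :=
      Real.sqrt_le_sqrt hsq
    have e3 : Real.sqrt (4*L^2 + 18*L) = 2 * Real.sqrt (L^2 + 9*L/2) := by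
      rw [show (4*L^2 + 18*L : ℝ) = 2^2 * (L^2 + 9*L/2) by ring,
        Real.sqrt_mul (by positivity), Real.sqrt_sq (by norm_num)]
    linarith [e1.trans (e2.trans_eq e3)]
  have hmain : u ≤ 2/3 * ((1 + s) * L) := by
    have : (1+s)*L = L + L*s := by ring
    rw [this, hLs]
    linarith
  have hlam : lam = Real.log u := (Real.log_exp lam).symm
  rw [hlam, sub_le_iff_le_add]
  have hrhs : Real.log (2/3) + Real.log (1 + s) + Real.log L
      = Real.log (2/3 * ((1+s) * L)) := by
    rw [Real.log_mul (by norm_num) (by positivity), Real.log_mul (by positivity) hLpos.ne']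
    ring
  calc Real.log u ≤ Real.log (2/3 * ((1+s)*L)) :=
        Real.log_le_log hu0 hmain
    _ = Real.log (2/3) + Real.log (1 + s) + Real.log L := hrhs.symm
    _ = Real.log (2/3) + Real.log (1 + s) + Real.log (-Real.log x) := by rw [hL]
end

section
/- Let x ∈ (0,1) and let λ ∈ ℝ satisfy x = e^{−e^λ}(e^λ + 1). Then λ − log(−log x) ≥ −log 2 + log( 1 + √( 1 − 8/log x ) ). -/
open Real

lemma lemA {u : ℝ} (hu : 0 ≤ u) : 2*u ≤ (u+2) * Real.log (1+u) := by
  have key : MonotoneOn (fun u : ℝ => (u+2) * Real.log (1+u) - 2*u) (Set.Ici 0) := by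
    apply monotoneOn_of_deriv_nonneg (convex_Ici 0)
    · apply ContinuousOn.sub
      · apply ContinuousOn.mul (by fun_prop)
        apply ContinuousOn.log (by fun_prop)
        intro x hx; simp at hx; nlinarith
      · fun_prop
    · apply DifferentiableOn.sub
      · apply DifferentiableOn.mul (by fun_prop)
        apply DifferentiableOn.log (by fun_prop)
        intro x hx
        simp [interior_Ici] at hx; nlinarith
      · fun_prop
    · intro x hx
      simp [interior_Ici] at hx
      have h1 : (0:ℝ) < 1 + x := by linarith
      have hd : HasDerivAt (fun u : ℝ => (u+2) * Real.log (1+u) - 2*u)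
          (1 * Real.log (1+x) + (x+2) * (1/(1+x)) - 2*1) x := by
        have : HasDerivAt (fun u : ℝ => Real.log (1+u)) (1/(1+x)) x := by
          simpa [Function.comp_def] using (Real.hasDerivAt_log h1.ne').comp x
            ((hasDerivAt_id x).const_add 1)
        exact (((hasDerivAt_id x).add_const 2).mul this).sub
          (((hasDerivAt_id x).const_mul 2) : HasDerivAt (fun u : ℝ => 2*u) (2*1) x)
      rw [hd.deriv]
      have hlog : 1 - (1+x)⁻¹ ≤ Real.log (1+x) := Real.one_sub_inv_le_log_of_pos h1
      have : (1+x)⁻¹ = 1/(1+x) := (one_div _).symm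
      rw [this] at hlog
      have : x / (1+x) ≤ Real.log (1+x) := by
        have : x / (1+x) = 1 - 1/(1+x) := by field_simp; ring
        linarith
      have h2 : (x+2) * (1/(1+x)) - 2 = -(x/(1+x)) := by field_simp; ring
      linarith
  have := key (Set.self_mem_Ici) (Set.mem_Ici.mpr hu) hu
  simp at this
  linarith

/-- Technical lemma (lower bound): if `x ∈ (0,1)` and `x = e^{−e^λ}(e^λ + 1)` then
`λ − log(−log x) ≥ −log 2 + log(1 + √(1 − 8/log x))`. -/
theorem solution_lower (x lam : ℝ) (hx : x ∈ Set.Ioo (0:ℝ) 1)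
    (h : x = Real.exp (-(Real.exp lam)) * (Real.exp lam + 1)) :
    -Real.log 2 + Real.log (1 + Real.sqrt (1 - 8 / Real.log x))
      ≤ lam - Real.log (-Real.log x) := by
  obtain ⟨hx0, hx1⟩ := hx
  set u := Real.exp lam with hud
  have hu : 0 < u := Real.exp_pos lam
  have hu1 : (0:ℝ) < u + 1 := by linarith
  have hlogx : Real.log x = -u + Real.log (u+1) := by
    rw [h, Real.log_mul (Real.exp_ne_zero _) hu1.ne', Real.log_exp]
  set L : ℝ := -Real.log x with hLd
  have hlogu1 : Real.log (u+1) < u := by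
    have := Real.log_lt_sub_one_of_pos hu1 (by linarith [hu] : u + 1 ≠ 1)
    linarith
  have hlogu1' : 0 < Real.log (u+1) := Real.log_pos (by linarith)
  have hL : 0 < L := by rw [hLd, hlogx]; linarith
  have hLe : L = u - Real.log (u+1) := by rw [hLd, hlogx]; ring
  -- key inequality : u^2 ≥ L * (u+2)
  have hkey : L * (u+2) ≤ u^2 := by
    have := lemA hu.le
    rw [add_comm 1 u] at this
    nlinarith [this, hLe]
  -- 2u - L ≥ 0
  have h2uL : L < 2 * u := by nlinarith
  -- sqrt bound
  have h8 : 1 - 8 / Real.log x = 1 + 8 / L := by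
    rw [hLd]; rw [div_neg]; ring_nf
  have hpos : 0 ≤ 2*u/L - 1 := by
    rw [sub_nonneg, le_div_iff₀ hL]; linarith
  have hsq : Real.sqrt (1 + 8 / L) ≤ 2*u/L - 1 := by
    rw [show (2*u/L - 1) = Real.sqrt ((2*u/L - 1)^2) from (Real.sqrt_sq hpos).symm]
    apply Real.sqrt_le_sqrt
    have h2 : (2*u/L-1)^2 = (2*u-L)^2/L^2 := by field_simp
    rw [h2, le_div_iff₀ (by positivity : (0:ℝ) < L^2)]
    have h3 : (1+8/L)*L^2 = L^2 + 8*L := by field_simp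
    nlinarith
  have hlam : lam = Real.log u := (Real.log_exp lam).symm
  have hmain : Real.log (1 + Real.sqrt (1 + 8 / L))
      ≤ Real.log 2 + (Real.log u - Real.log L) := by
    have hle : 1 + Real.sqrt (1 + 8 / L) ≤ 2 * (u / L) := by
      have : 2 * (u/L) = 2*u/L := by ring
      rw [this]; linarith
    calc Real.log (1 + Real.sqrt (1 + 8 / L))
        ≤ Real.log (2 * (u/L)) := by
          apply Real.log_le_log (by positivity) hle
      _ = Real.log 2 + (Real.log u - Real.log L) := by
          rw [Real.log_mul two_ne_zero (by positivity), Real.log_div hu.ne' hL.ne']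
  rw [h8]
  linarith
end
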